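/- arXiv:2010.00886 — 5 statements merged into one kernel-verified Lean document; each statement's English description precedes it below -/
import Mathlib

section
/- For every integer d ≥ 3, the tree T(4,d) satisfies α_e(T(4,d)) ≥ (2/3^3)·(n(T(4,d)) + 1), where n(T(4,d)) = 2·3^d − 1 (so the bound equals (2/27)·2·3^d). -/
open SimpleGraph
open scoped Classical

/-- The graph obtained from `G` by deleting the vertices of `A`
(they are kept as isolated vertices, which does not affect adjacency or distances
among the remaining vertices). -/
def SimpleGraph.deleteSet {V : Type*} (G : SimpleGraph V) (A : Set V) : SimpleGraph V where
  Adj x y := G.Adj x y ∧ x ∉ A ∧ y ∉ A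
  symm := ⟨fun _ _ ⟨h, hx, hy⟩ => ⟨h.symm, hy, hx⟩⟩
  loopless := ⟨fun x ⟨h, _, _⟩ => G.loopless.irrefl x h⟩

/-- `dist_{(G,S)}(u,v)`: the distance between `u` and `v` in `G - (S \ {u,v})`,
with value `⊤` if `u` and `v` lie in different components of that graph. -/
noncomputable def distDel {V : Type*} (G : SimpleGraph V) (S : Set V) (u v : V) : ℕ∞ :=
  (G.deleteSet (S \ {u, v})).edist u v

/-- `w_{(G,S)}(u) = Σ_{v ∈ S} (1/2)^{dist_{(G,S)}(u,v) - 1}` for a finite set `S`,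
where a summand with infinite distance equals `0`. -/
noncomputable def expW {V : Type*} (G : SimpleGraph V) (S : Finset V) (u : V) : ℝ :=
  ∑ v ∈ S, if distDel G (↑S) u v = ⊤ then 0
    else 2 * (1 / 2 : ℝ) ^ (distDel G (↑S) u v).toNat

/-- `S` is exponentially independent in `G`: `w_{(G,S∖{u})}(u) < 1` for every `u ∈ S`. -/
def ExpIndep {V : Type*} (G : SimpleGraph V) (S : Finset V) : Prop :=
  ∀ u ∈ S, expW G (S.erase u) u < 1

/-- The exponential independence number of `G`: the maximum cardinality of an
exponentially independent set in `G`. -/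
noncomputable def expIndepNum (V : Type*) [Fintype V] (G : SimpleGraph V) : ℕ :=
  sSup {m : ℕ | ∃ S : Finset V, ExpIndep G S ∧ S.card = m}

/-- `G` is (isomorphic to) the tree `T(Δ,d)` with root `r`: a finite tree in which every
leaf is at distance exactly `d` from `r` and every non-leaf vertex has degree `Δ`. -/
def IsTreeTDelta {V : Type*} (G : SimpleGraph V) (r : V) (Δ d : ℕ) : Prop :=
  G.Connected ∧ G.IsAcyclic ∧
  (∀ v : V, (G.neighborSet v).ncard = 1 → G.edist r v = (d : ℕ∞)) ∧
  (∀ v : V, (G.neighborSet v).ncard ≠ 1 → (G.neighborSet v).ncard = Δ)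

set_option linter.unusedSectionVars false
set_option linter.unusedVariables false
set_option maxHeartbeats 1000000

namespace TreeAux
open SimpleGraph Walk

variable {V : Type} [Fintype V] {G : SimpleGraph V} {r : V}

/-- parent of a vertex (root maps to itself). -/
noncomputable def par (G : SimpleGraph V) (r : V) (x : V) : V :=
  if h : ∃ y, G.Adj x y ∧ G.dist r y + 1 = G.dist r x then h.choose else r

/-- k-fold ancestor. -/
noncomputable def anc (G : SimpleGraph V) (r : V) (k : ℕ) (x : V) : V := (par G r)^[k] x

lemma anc_zero (x : V) : anc G r 0 x = x := rfl

lemma anc_succ (k : ℕ) (x : V) : anc G r (k+1) x = anc G r k (par G r x) :=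
  Function.iterate_succ_apply _ _ _

lemma anc_add (j k : ℕ) (x : V) : anc G r j (anc G r k x) = anc G r (j + k) x :=
  (Function.iterate_add_apply _ _ _ _).symm

/-- On a shortest walk, distances split. -/
lemma dist_split (hc : G.Connected) {x w : V} (p : G.Walk r x)
    (hp : p.length = G.dist r x) (hw : w ∈ p.support) :
    G.dist r w + G.dist w x ≤ G.dist r x := by
  have h1 : G.dist r w ≤ (p.takeUntil w hw).length := dist_le _
  have h2 : G.dist w x ≤ (p.dropUntil w hw).length := dist_le _
  have h3 : (p.takeUntil w hw).length + (p.dropUntil w hw).length = p.length := by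
    rw [← Walk.length_append, Walk.take_spec]
  omega

lemma adj_dist_ne (hc : G.Connected) (ha : G.IsAcyclic) {x y : V} (h : G.Adj x y) :
    G.dist r x ≠ G.dist r y := by
  intro heq
  obtain ⟨p, hpp, hpl⟩ := hc.exists_path_of_dist r x
  by_cases hy : y ∈ p.support
  · have hsplit := dist_split hc p hpl hy
    have h1 : 0 < G.dist y x := hc.pos_dist_of_ne (fun e => h.ne e.symm)
    omega
  · have hq : (p.concat h).IsPath := by
      rw [← isPath_reverse_iff, Walk.reverse_concat]
      refine (Walk.cons_isPath_iff _ _).2 ⟨hpp.reverse, ?_⟩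
      rw [Walk.support_reverse]
      simpa using hy
    obtain ⟨p2, hp2p, hp2l⟩ := hc.exists_path_of_dist r y
    have := ha.path_unique ⟨p.concat h, hq⟩ ⟨p2, hp2p⟩
    have hlen : (p.concat h).length = p2.length := by
      have h2 := congrArg (fun q : G.Path r y => q.1.length) this
      simpa using h2
    rw [Walk.length_concat, hpl, hp2l, heq] at hlen
    omega

lemma adj_dist (hc : G.Connected) (ha : G.IsAcyclic) {x y : V} (h : G.Adj x y) :
    G.dist r y = G.dist r x + 1 ∨ G.dist r x = G.dist r y + 1 := by
  have h1 : G.dist x y = 1 := dist_eq_one_iff_adj.2 h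
  have h2 : G.dist y x = 1 := dist_eq_one_iff_adj.2 h.symm
  have t1 : G.dist r y ≤ G.dist r x + G.dist x y := hc.dist_triangle
  have t2 : G.dist r x ≤ G.dist r y + G.dist y x := hc.dist_triangle
  have := adj_dist_ne (r := r) hc ha h
  omega

lemma parent_unique (hc : G.Connected) (ha : G.IsAcyclic) {x y y' : V}
    (hxy : G.Adj x y) (hxy' : G.Adj x y')
    (hdy : G.dist r y + 1 = G.dist r x) (hdy' : G.dist r y' + 1 = G.dist r x) :
    y = y' := by
  have key : ∀ {z : V}, G.Adj x z → G.dist r z + 1 = G.dist r x →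
      ∀ (p : G.Walk r z), p.IsPath → p.length = G.dist r z → x ∉ p.support := by
    intro z hz hdz p hpp hpl hx
    have hsplit := dist_split hc p hpl hx
    have h1 : 0 < G.dist x z := hc.pos_dist_of_ne hz.ne
    omega
  obtain ⟨p, hpp, hpl⟩ := hc.exists_path_of_dist r y
  obtain ⟨p', hpp', hpl'⟩ := hc.exists_path_of_dist r y'
  have hx : x ∉ p.support := key hxy hdy p hpp hpl
  have hx' : x ∉ p'.support := key hxy' hdy' p' hpp' hpl'
  have hq : (p.concat hxy.symm).IsPath := by
    rw [← isPath_reverse_iff, Walk.reverse_concat]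
    refine (Walk.cons_isPath_iff _ _).2 ⟨hpp.reverse, ?_⟩
    rw [Walk.support_reverse]; simpa using hx
  have hq' : (p'.concat hxy'.symm).IsPath := by
    rw [← isPath_reverse_iff, Walk.reverse_concat]
    refine (Walk.cons_isPath_iff _ _).2 ⟨hpp'.reverse, ?_⟩
    rw [Walk.support_reverse]; simpa using hx'
  have := ha.path_unique ⟨p.concat hxy.symm, hq⟩ ⟨p'.concat hxy'.symm, hq'⟩
  rw [Subtype.ext_iff] at this
  obtain ⟨hv, -⟩ := Walk.concat_inj this
  exact hv

lemma par_spec (hc : G.Connected) (ha : G.IsAcyclic) {x : V} (hx : x ≠ r) :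
    G.Adj x (par G r x) ∧ G.dist r (par G r x) + 1 = G.dist r x := by
  have hpos : 0 < G.dist r x := hc.pos_dist_of_ne (Ne.symm hx)
  obtain ⟨p, hpl⟩ := hc.exists_walk_length_eq_dist r x
  have hex : ∃ y, G.Adj x y ∧ G.dist r y + 1 = G.dist r x := by
    cases hrev : p.reverse with
    | nil =>
      exfalso
      have := congrArg Walk.length hrev
      simp only [Walk.length_reverse, Walk.length_nil, hpl] at this
      omega
    | @cons _ w _ hadj q =>
      have hlq : q.length + 1 = G.dist r x := by
        have := congrArg Walk.length hrev
        simpa [hpl] using this.symm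
      have h1 : G.dist r w ≤ q.length := by
        have := dist_le q.reverse
        simpa [SimpleGraph.dist_comm] using this
      have h2 : G.dist r x ≤ G.dist r w + 1 := by
        have t : G.dist r x ≤ G.dist r w + G.dist w x := hc.dist_triangle
        have : G.dist w x = 1 := dist_eq_one_iff_adj.2 hadj.symm
        omega
      exact ⟨w, hadj, by omega⟩
  rw [par, dif_pos hex]
  exact hex.choose_spec

lemma par_r : par G r r = r := by
  rw [par, dif_neg]
  rintro ⟨y, hy, hdy⟩
  simp [SimpleGraph.dist_self] at hdy

lemma par_eq (hc : G.Connected) (ha : G.IsAcyclic) {x y : V}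
    (hxy : G.Adj x y) (hd : G.dist r y + 1 = G.dist r x) : par G r x = y := by
  have hx : x ≠ r := by
    intro e; subst e; simp [SimpleGraph.dist_self] at hd
  obtain ⟨h1, h2⟩ := par_spec hc ha hx
  exact parent_unique hc ha h1 hxy h2 hd

lemma adj_dichotomy (hc : G.Connected) (ha : G.IsAcyclic) {x y : V} (h : G.Adj x y) :
    y = par G r x ∨ x = par G r y := by
  rcases adj_dist (r := r) hc ha h with hcase | hcase
  · right; exact (par_eq hc ha h.symm (by omega)).symm
  · left; exact (par_eq hc ha h (by omega)).symm


/-- Key lemma: walks that are too short force common ancestors. -/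
lemma key_walk (hc : G.Connected) (ha : G.IsAcyclic) {x y : V} (p : G.Walk x y) :
    ∀ kx ky : ℕ, kx ≤ G.dist r x → ky ≤ G.dist r y →
      G.dist r x + ky = G.dist r y + kx → p.length ≤ kx + ky →
      anc G r kx x = anc G r ky y := by
  induction p with
  | nil =>
    intro kx ky h1 h2 h3 h4
    have : kx = ky := by omega
    subst this; rfl
  | @cons a b c h q ih =>
    intro kx ky h1 h2 h3 h4
    simp only [Walk.length_cons] at h4
    rcases adj_dichotomy (r := r) hc ha h with hb | hpa
    · -- b = par a, going up
      have haR : a ≠ r := by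
        intro e; subst e
        rw [par_r] at hb
        subst hb
        exact G.loopless.irrefl _ h
      obtain ⟨-, hd⟩ := par_spec (r := r) hc ha haR
      rw [← hb] at hd
      rcases Nat.eq_zero_or_pos kx with h0 | hpos
      · exfalso
        subst h0
        have t1 : G.dist b c ≤ q.length := dist_le q
        have t2 : G.dist r c ≤ G.dist r b + G.dist b c := hc.dist_triangle
        omega
      · have hres := ih (kx - 1) ky (by omega) h2 (by omega) (by omega)
        have hstep : anc G r kx a = anc G r (kx - 1) b := by
          conv_lhs => rw [show kx = (kx - 1) + 1 by omega]
          rw [anc_succ, ← hb]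
        rw [hstep, hres]
    · -- a = par b, going down
      have hbR : b ≠ r := by
        intro e; subst e
        rw [par_r] at hpa; subst hpa
        exact G.loopless.irrefl _ h
      obtain ⟨-, hd⟩ := par_spec (r := r) hc ha hbR
      rw [← hpa] at hd
      have hres := ih (kx + 1) ky (by omega) h2 (by omega) (by omega)
      have : anc G r (kx + 1) b = anc G r kx a := by
        rw [anc_succ, hpa]
      rw [← this, hres]

/-- If the distance is at most `2k` and depths agree, the `k`-ancestors agree. -/
lemma key_dist (hc : G.Connected) (ha : G.IsAcyclic) {x y : V} {k : ℕ}
    (hxy : G.dist r x = G.dist r y) (hk : k ≤ G.dist r x)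
    (hd : G.dist x y ≤ k + k) : anc G r k x = anc G r k y := by
  obtain ⟨p, hp⟩ := hc.exists_walk_length_eq_dist x y
  exact key_walk hc ha p k k hk (hxy ▸ hk) (by omega) (by omega)

lemma dist_ge_of_anc_ne (hc : G.Connected) (ha : G.IsAcyclic) {x y : V} {k : ℕ}
    (hxy : G.dist r x = G.dist r y) (hk : k ≤ G.dist r x)
    (hne : anc G r k x ≠ anc G r k y) : 2 * k + 1 ≤ G.dist x y := by
  by_contra hlt
  exact hne (key_dist hc ha hxy hk (by omega))

lemma anc_depth (hc : G.Connected) (ha : G.IsAcyclic) {x : V} :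
    ∀ k, k ≤ G.dist r x → G.dist r (anc G r k x) + k = G.dist r x := by
  intro k
  induction k with
  | zero => intro _; simp [anc_zero]
  | succ n ihn =>
    intro hn
    have ih := ihn (by omega)
    have hne : anc G r n x ≠ r := by
      intro e
      rw [e, SimpleGraph.dist_self] at ih
      omega
    obtain ⟨-, hd⟩ := par_spec (r := r) hc ha hne
    have : anc G r (n + 1) x = par G r (anc G r n x) := Function.iterate_succ_apply' _ _ _
    rw [this]
    omega

lemma anc_eq_r (hc : G.Connected) (ha : G.IsAcyclic) {x : V} :
    anc G r (G.dist r x) x = r := by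
  have := anc_depth (r := r) hc ha (G.dist r x) le_rfl
  have h0 : G.dist r (anc G r (G.dist r x) x) = 0 := by omega
  exact (hc.dist_eq_zero_iff.1 h0).symm


section Struct

variable {d : ℕ}

/-- Every vertex has depth at most `d`. -/
lemma depth_le (hc : G.Connected) (ha : G.IsAcyclic)
    (hleaf : ∀ v : V, G.degree v = 1 → G.dist r v = d)
    (hdeg : ∀ v : V, G.degree v ≠ 1 → G.degree v = 4)
    (hd : 3 ≤ d) (v : V) : G.dist r v ≤ d := by
  obtain ⟨x, -, hx⟩ := Finset.exists_max_image (Finset.univ : Finset V)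
    (fun v => G.dist r v) ⟨r, Finset.mem_univ r⟩
  have hmax : ∀ y : V, G.dist r y ≤ G.dist r x := fun y => hx y (Finset.mem_univ y)
  suffices h : G.dist r x ≤ d by exact le_trans (hmax v) h
  by_contra hgt
  push_neg at hgt
  have hnl : G.degree x = 4 := by
    apply hdeg
    intro h1
    have := hleaf x h1
    omega
  have hxr : x ≠ r := by
    intro e; subst e; rw [SimpleGraph.dist_self] at hgt; omega
  have hsub : G.neighborFinset x ⊆ {par G r x} := by
    intro y hy
    rw [SimpleGraph.mem_neighborFinset] at hy
    rcases adj_dichotomy (r := r) hc ha hy with h1 | h1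
    · simp [h1]
    · exfalso
      have hyR : y ≠ r := by
        intro e; subst e; rw [par_r] at h1; subst h1; exact G.loopless.irrefl _ hy
      obtain ⟨-, hdp⟩ := par_spec (r := r) hc ha hyR
      rw [← h1] at hdp
      have := hmax y
      omega
  have := Finset.card_le_card hsub
  rw [SimpleGraph.card_neighborFinset_eq_degree, hnl] at this
  simp at this

/-- children of a vertex -/
noncomputable def chl (G : SimpleGraph V) (r : V) [Fintype V] (x : V) : Finset V :=
  (G.neighborFinset x).erase (par G r x)

lemma mem_chl (hc : G.Connected) (ha : G.IsAcyclic) {x y : V} :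
    y ∈ chl G r x ↔ (y ≠ r ∧ par G r y = x) := by
  constructor
  · rintro hy
    rw [chl, Finset.mem_erase, SimpleGraph.mem_neighborFinset] at hy
    obtain ⟨hne, hadj⟩ := hy
    rcases adj_dichotomy (r := r) hc ha hadj with h1 | h1
    · exact absurd h1 hne
    · refine ⟨?_, h1.symm⟩
      intro e; subst e
      rw [par_r] at h1; subst h1; exact G.loopless.irrefl _ hadj
  · rintro ⟨hyR, hpy⟩
    obtain ⟨hadj, hdp⟩ := par_spec (r := r) hc ha hyR
    rw [hpy] at hadj hdp
    rw [chl, Finset.mem_erase, SimpleGraph.mem_neighborFinset]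
    refine ⟨?_, hadj.symm⟩
    intro e
    by_cases hxr : x = r
    · subst hxr; rw [par_r] at e; subst e; exact G.loopless.irrefl _ hadj
    · obtain ⟨-, hdp'⟩ := par_spec (r := r) hc ha hxr
      rw [← e] at hdp'
      omega

lemma chl_depth (hc : G.Connected) (ha : G.IsAcyclic) {x y : V} (hy : y ∈ chl G r x) :
    G.dist r y = G.dist r x + 1 := by
  rw [mem_chl hc ha] at hy
  obtain ⟨hyR, hpy⟩ := hy
  obtain ⟨-, hdp⟩ := par_spec (r := r) hc ha hyR
  rw [hpy] at hdp
  omega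

lemma card_chl (hc : G.Connected) (ha : G.IsAcyclic)
    (hleaf : ∀ v : V, G.degree v = 1 → G.dist r v = d)
    (hdeg : ∀ v : V, G.degree v ≠ 1 → G.degree v = 4)
    {x : V} (hx : x ≠ r) (hxd : G.dist r x < d) : (chl G r x).card = 3 := by
  have hnl : G.degree x = 4 := by
    apply hdeg; intro h1; have := hleaf x h1; omega
  obtain ⟨hadj, -⟩ := par_spec (r := r) hc ha hx
  rw [chl, Finset.card_erase_of_mem (by rwa [SimpleGraph.mem_neighborFinset])]
  rw [← SimpleGraph.card_neighborFinset_eq_degree] at hnl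
  omega

lemma chl_r (hc : G.Connected) : chl G r r = G.neighborFinset r := by
  rw [chl, par_r, Finset.erase_eq_self]
  simp

lemma card_chl_r (hc : G.Connected)
    (hleaf : ∀ v : V, G.degree v = 1 → G.dist r v = d)
    (hdeg : ∀ v : V, G.degree v ≠ 1 → G.degree v = 4)
    (hd : 3 ≤ d) : (chl G r r).card = 4 := by
  rw [chl_r hc, SimpleGraph.card_neighborFinset_eq_degree]
  apply hdeg
  intro h1
  have := hleaf r h1
  simp [SimpleGraph.dist_self] at this
  omega

lemma card_chl_le (hc : G.Connected) (ha : G.IsAcyclic)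
    (hdeg : ∀ v : V, G.degree v ≠ 1 → G.degree v = 4)
    {x : V} (hx : x ≠ r) : (chl G r x).card ≤ 3 := by
  have hdx : G.degree x ≤ 4 := by
    by_cases h1 : G.degree x = 1
    · omega
    · exact (hdeg x h1).le
  obtain ⟨hadj, -⟩ := par_spec (r := r) hc ha hx
  rw [chl, Finset.card_erase_of_mem (by rwa [SimpleGraph.mem_neighborFinset])]
  rw [← SimpleGraph.card_neighborFinset_eq_degree] at hdx
  omega

lemma card_chl_le4 {x : V} : (chl G r x).card ≤ 4 ∨ G.degree x = 1 ∨ G.degree x ≠ 1 := by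
  exact Or.inr (em _)

/-- level sets -/
noncomputable def lvl (G : SimpleGraph V) (r : V) [Fintype V] (k : ℕ) : Finset V :=
  Finset.univ.filter (fun v => G.dist r v = k)

lemma mem_lvl {k : ℕ} {v : V} : v ∈ lvl G r k ↔ G.dist r v = k := by
  simp [lvl]

lemma lvl_zero (hc : G.Connected) : lvl G r 0 = {r} := by
  ext v
  simp [mem_lvl, Finset.mem_singleton, hc.dist_eq_zero_iff, eq_comm]

lemma card_lvl_succ (hc : G.Connected) (ha : G.IsAcyclic) (k : ℕ) :
    (lvl G r (k+1)).card = ∑ x ∈ lvl G r k, (chl G r x).card := by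
  rw [Finset.card_eq_sum_card_fiberwise (f := par G r) (t := lvl G r k)]
  · apply Finset.sum_congr rfl
    intro x hx
    congr 1
    ext y
    rw [Finset.mem_filter, mem_lvl, mem_chl hc ha]
    rw [mem_lvl] at hx
    constructor
    · rintro ⟨hdy, hpy⟩
      refine ⟨?_, hpy⟩
      intro e; subst e; simp [SimpleGraph.dist_self] at hdy
    · rintro ⟨hyR, hpy⟩
      obtain ⟨-, hdp⟩ := par_spec (r := r) hc ha hyR
      rw [hpy] at hdp
      exact ⟨by omega, hpy⟩
  · intro y hy
    rw [Finset.mem_coe, mem_lvl] at hy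
    have hyR : y ≠ r := by
      intro e; subst e; simp [SimpleGraph.dist_self] at hy
    obtain ⟨-, hdp⟩ := par_spec (r := r) hc ha hyR
    rw [Finset.mem_coe, mem_lvl]
    omega

lemma card_lvl (hc : G.Connected) (ha : G.IsAcyclic)
    (hleaf : ∀ v : V, G.degree v = 1 → G.dist r v = d)
    (hdeg : ∀ v : V, G.degree v ≠ 1 → G.degree v = 4)
    (hd : 3 ≤ d) : ∀ k, 1 ≤ k → k ≤ d → (lvl G r k).card = 4 * 3 ^ (k - 1) := by
  intro k
  induction k with
  | zero => omega
  | succ n ihn =>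
    intro h1 h2
    rcases Nat.eq_zero_or_pos n with h0 | hpos
    · subst h0
      rw [card_lvl_succ hc ha, lvl_zero hc, Finset.sum_singleton,
        card_chl_r hc hleaf hdeg hd]
      norm_num
    · rw [card_lvl_succ hc ha]
      have hsum : ∀ x ∈ lvl G r n, (chl G r x).card = 3 := by
        intro x hx
        rw [mem_lvl] at hx
        apply card_chl hc ha hleaf hdeg
        · intro e; subst e; simp [SimpleGraph.dist_self] at hx; omega
        · omega
      rw [Finset.sum_congr rfl hsum, Finset.sum_const, smul_eq_mul]
      rw [ihn hpos (by omega)]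
      have : n - 1 + 1 = n := by omega
      rw [show n + 1 - 1 = (n - 1) + 1 by omega, pow_succ]
      ring

lemma card_V (hc : G.Connected) (ha : G.IsAcyclic)
    (hleaf : ∀ v : V, G.degree v = 1 → G.dist r v = d)
    (hdeg : ∀ v : V, G.degree v ≠ 1 → G.degree v = 4)
    (hd : 3 ≤ d) : Fintype.card V + 1 = 2 * 3 ^ d := by
  have hcard : Fintype.card V = ∑ k ∈ Finset.range (d + 1), (lvl G r k).card := by
    rw [← Finset.card_univ]
    rw [Finset.card_eq_sum_card_fiberwise (f := fun v => G.dist r v)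
      (t := Finset.range (d + 1))]
    · rfl
    · intro v _
      rw [Finset.mem_coe, Finset.mem_range]
      beta_reduce
      have := depth_le hc ha hleaf hdeg hd v
      omega
  rw [hcard]
  rw [Finset.sum_range_succ' (fun k => (lvl G r k).card) d]
  rw [lvl_zero hc]
  simp only [Finset.card_singleton]
  have hlv : ∀ k ∈ Finset.range d, (lvl G r (k + 1)).card = 4 * 3 ^ k := by
    intro k hk
    rw [Finset.mem_range] at hk
    rw [card_lvl hc ha hleaf hdeg hd (k + 1) (by omega) (by omega)]
    simp
  rw [Finset.sum_congr rfl hlv]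
  -- 4 * sum 3^k + 1 + 1 = 2 * 3^d
  have : ∀ n : ℕ, ∑ k ∈ Finset.range n, 4 * 3 ^ k + 2 = 2 * 3 ^ n := by
    intro n
    induction n with
    | zero => simp
    | succ m ihm =>
      rw [Finset.sum_range_succ, pow_succ]
      omega
  have h := this d
  omega


/-- vertices at depth `dist r a + j` whose `j`-th ancestor is `a` -/
noncomputable def sub (G : SimpleGraph V) (r : V) [Fintype V] (a : V) (j : ℕ) : Finset V :=
  (lvl G r (G.dist r a + j)).filter (fun h => anc G r j h = a)

lemma mem_sub {a : V} {j : ℕ} {y : V} :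
    y ∈ sub G r a j ↔ G.dist r y = G.dist r a + j ∧ anc G r j y = a := by
  simp [sub, mem_lvl]

lemma card_sub_succ (hc : G.Connected) (ha : G.IsAcyclic) (a : V) (j : ℕ) :
    (sub G r a (j+1)).card = ∑ x ∈ sub G r a j, (chl G r x).card := by
  rw [Finset.card_eq_sum_card_fiberwise (f := par G r) (t := sub G r a j)]
  · apply Finset.sum_congr rfl
    intro x hx
    rw [mem_sub] at hx
    congr 1
    ext y
    rw [Finset.mem_filter, mem_sub, mem_chl hc ha]
    constructor
    · rintro ⟨⟨hdy, hay⟩, hpy⟩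
      refine ⟨?_, hpy⟩
      intro e; subst e; rw [SimpleGraph.dist_self] at hdy; omega
    · rintro ⟨hyR, hpy⟩
      obtain ⟨-, hdp⟩ := par_spec (r := r) hc ha hyR
      rw [hpy] at hdp
      refine ⟨⟨by omega, ?_⟩, hpy⟩
      rw [anc_succ, hpy, hx.2]
  · intro y hy
    rw [Finset.mem_coe, mem_sub] at hy
    obtain ⟨hdy, hay⟩ := hy
    have hyR : y ≠ r := by
      intro e; subst e; rw [SimpleGraph.dist_self] at hdy; omega
    obtain ⟨-, hdp⟩ := par_spec (r := r) hc ha hyR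
    rw [Finset.mem_coe, mem_sub]
    constructor
    · omega
    · rw [← anc_succ, hay]

lemma card_sub_zero (a : V) : (sub G r a 0).card ≤ 1 := by
  have : sub G r a 0 ⊆ {a} := by
    intro y hy
    rw [mem_sub] at hy
    simp only [anc_zero] at hy
    simp [hy.2]
  simpa using Finset.card_le_card this

lemma card_sub_le (hc : G.Connected) (ha : G.IsAcyclic)
    (hdeg : ∀ v : V, G.degree v ≠ 1 → G.degree v = 4) (a : V) :
    ∀ j : ℕ, (sub G r a (j+1)).card ≤ 4 * 3 ^ j := by
  have hdegle : ∀ x : V, (chl G r x).card ≤ 4 := by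
    intro x
    have h1 : (chl G r x).card ≤ (G.neighborFinset x).card := by
      apply Finset.card_le_card
      rw [chl]
      exact Finset.erase_subset _ _
    rw [SimpleGraph.card_neighborFinset_eq_degree] at h1
    by_cases h2 : G.degree x = 1
    · omega
    · have := hdeg x h2; omega
  intro j
  induction j with
  | zero =>
    rw [card_sub_succ hc ha]
    calc ∑ x ∈ sub G r a 0, (chl G r x).card
        ≤ ∑ _x ∈ sub G r a 0, 4 := Finset.sum_le_sum (fun x _ => hdegle x)
      _ = (sub G r a 0).card * 4 := by rw [Finset.sum_const, smul_eq_mul]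
      _ ≤ 1 * 4 := by
          have := card_sub_zero (G := G) (r := r) a
          exact Nat.mul_le_mul_right 4 this
      _ = 4 * 3 ^ 0 := by norm_num
  | succ n ihn =>
    rw [card_sub_succ hc ha]
    have hx3 : ∀ x ∈ sub G r a (n+1), (chl G r x).card ≤ 3 := by
      intro x hx
      rw [mem_sub] at hx
      apply card_chl_le hc ha hdeg
      intro e; subst e; rw [SimpleGraph.dist_self] at hx; omega
    calc ∑ x ∈ sub G r a (n+1), (chl G r x).card
        ≤ ∑ _x ∈ sub G r a (n+1), 3 := Finset.sum_le_sum hx3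
      _ = (sub G r a (n+1)).card * 3 := by rw [Finset.sum_const, smul_eq_mul]
      _ ≤ (4 * 3 ^ n) * 3 := Nat.mul_le_mul_right 3 ihn
      _ = 4 * 3 ^ (n+1) := by ring

lemma geo_sum : ∀ n : ℕ, ∑ j ∈ Finset.range n, ((1/4:ℝ)*(3/4)^j) = 1 - (3/4)^n := by
  intro n
  induction n with
  | zero => simp
  | succ m ih => rw [Finset.sum_range_succ, ih, pow_succ]; ring

/-- pick a child -/
noncomputable def pick (G : SimpleGraph V) (r : V) [Fintype V] (x : V) : V :=
  if h : (chl G r x).Nonempty then h.choose else x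

lemma pick_mem {x : V} (h : (chl G r x).Nonempty) : pick G r x ∈ chl G r x := by
  rw [pick, dif_pos h]
  exact h.choose_spec

/-- select a grandchild -/
noncomputable def sel (G : SimpleGraph V) (r : V) [Fintype V] (g : V) : V :=
  pick G r (pick G r g)

section Sel

variable {d : ℕ} (hc : G.Connected) (ha : G.IsAcyclic)
  (hleaf : ∀ v : V, G.degree v = 1 → G.dist r v = d)
  (hdeg : ∀ v : V, G.degree v ≠ 1 → G.degree v = 4)
  (hd : 3 ≤ d)

include hc ha hleaf hdeg hd

lemma chl_nonempty {x : V} (hx : x ≠ r) (hxd : G.dist r x < d) :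
    (chl G r x).Nonempty := by
  rw [← Finset.card_pos, card_chl hc ha hleaf hdeg hx hxd]
  norm_num

lemma sel_spec {g : V} (hg : G.dist r g = d - 2) :
    G.dist r (sel G r g) = d ∧ anc G r 2 (sel G r g) = g := by
  have hgr : g ≠ r := by
    intro e; subst e; rw [SimpleGraph.dist_self] at hg; omega
  have hne1 : (chl G r g).Nonempty := chl_nonempty hc ha hleaf hdeg hd hgr (by omega)
  have hc1 := pick_mem (G := G) (r := r) hne1
  have hd1 : G.dist r (pick G r g) = d - 1 := by
    rw [chl_depth hc ha hc1, hg]; omega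
  have hp1 : par G r (pick G r g) = g := ((mem_chl hc ha).1 hc1).2
  have hcr : pick G r g ≠ r := by
    intro e; rw [e, SimpleGraph.dist_self] at hd1; omega
  have hne2 : (chl G r (pick G r g)).Nonempty :=
    chl_nonempty hc ha hleaf hdeg hd hcr (by omega)
  have hc2 := pick_mem (G := G) (r := r) hne2
  have hd2 : G.dist r (sel G r g) = d := by
    rw [sel, chl_depth hc ha hc2, hd1]; omega
  have hp2 : par G r (sel G r g) = pick G r g := ((mem_chl hc ha).1 hc2).2
  refine ⟨hd2, ?_⟩
  show anc G r 2 (sel G r g) = g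
  rw [show (2 : ℕ) = 1 + 1 from rfl, anc_succ, hp2, anc_succ, hp1, anc_zero]

/-- the exponentially independent set -/
noncomputable def SS (G : SimpleGraph V) (r : V) [Fintype V] (d : ℕ) : Finset V :=
  (lvl G r (d - 2)).image (sel G r)

lemma card_SS : (SS G r d).card = (lvl G r (d - 2)).card := by
  rw [SS]
  apply Finset.card_image_of_injOn
  intro g hg g' hg' he
  simp only [Finset.coe_filter, Set.mem_setOf_eq, lvl, Finset.mem_coe, Finset.mem_filter] at hg hg'
  have h1 := (sel_spec hc ha hleaf hdeg hd hg.2).2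
  have h2 := (sel_spec hc ha hleaf hdeg hd hg'.2).2
  rw [← h1, ← h2, he]

lemma mem_SS {u : V} (hu : u ∈ SS G r d) :
    G.dist r u = d ∧ anc G r 2 u ∈ lvl G r (d - 2) ∧ sel G r (anc G r 2 u) = u := by
  rw [SS, Finset.mem_image] at hu
  obtain ⟨g, hg, he⟩ := hu
  rw [mem_lvl] at hg
  obtain ⟨h1, h2⟩ := sel_spec hc ha hleaf hdeg hd hg
  rw [he] at h1 h2
  exact ⟨h1, by rw [h2, mem_lvl]; exact hg, by rw [h2, he]⟩


lemma expIndep_SS : ExpIndep G (SS G r d) := by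
  intro u hu
  obtain ⟨hud, hg2, hgsel⟩ := mem_SS hc ha hleaf hdeg hd hu
  set E := (SS G r d).erase u with hE
  set μ : V → ℕ := fun v => sInf {k | anc G r k u = anc G r k v} with hμdef
  have hvS : ∀ v ∈ E, v ∈ SS G r d ∧ v ≠ u := by
    intro v hv; rw [hE, Finset.mem_erase] at hv; exact ⟨hv.2, hv.1⟩
  have hμfacts : ∀ v ∈ E, 3 ≤ μ v ∧ μ v ≤ d ∧ anc G r (μ v) u = anc G r (μ v) v ∧
      anc G r (μ v - 1) u ≠ anc G r (μ v - 1) v := by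
    intro v hv
    obtain ⟨hvS', hvne⟩ := hvS v hv
    obtain ⟨hvd, hvg2, hvsel⟩ := mem_SS hc ha hleaf hdeg hd hvS'
    have hdK : d ∈ {k | anc G r k u = anc G r k v} := by
      show anc G r d u = anc G r d v
      have h1 : anc G r (G.dist r u) u = r := anc_eq_r hc ha
      have h2 : anc G r (G.dist r v) v = r := anc_eq_r hc ha
      rw [hud] at h1; rw [hvd] at h2; rw [h1, h2]
    have hsne : {k | anc G r k u = anc G r k v}.Nonempty := ⟨d, hdK⟩
    have hmem : anc G r (μ v) u = anc G r (μ v) v := Nat.sInf_mem hsne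
    have hle : μ v ≤ d := Nat.sInf_le hdK
    have h3 : 3 ≤ μ v := by
      by_contra hcon
      push_neg at hcon
      have heq : anc G r 2 u = anc G r 2 v := by
        have e1 : anc G r (2 - μ v) (anc G r (μ v) u)
            = anc G r (2 - μ v) (anc G r (μ v) v) := by rw [hmem]
        rw [anc_add, anc_add, show 2 - μ v + μ v = 2 by omega] at e1
        exact e1
      apply hvne
      rw [← hvsel, ← heq, hgsel]
    have h4 : anc G r (μ v - 1) u ≠ anc G r (μ v - 1) v := by
      have hμv : μ v = sInf {k | anc G r k u = anc G r k v} := by simp only [hμdef]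
      have hlt : μ v - 1 < sInf {k | anc G r k u = anc G r k v} := by omega
      exact Nat.notMem_of_lt_sInf hlt
    exact ⟨h3, hle, hmem, h4⟩
  have hdist : ∀ v ∈ E, 2 * μ v - 1 ≤ G.dist u v := by
    intro v hv
    obtain ⟨h3, hle, hmem, h4⟩ := hμfacts v hv
    obtain ⟨hvS', hvne⟩ := hvS v hv
    obtain ⟨hvd, -, -⟩ := mem_SS hc ha hleaf hdeg hd hvS'
    have := dist_ge_of_anc_ne hc ha (x := u) (y := v) (k := μ v - 1)
      (by rw [hud, hvd]) (by rw [hud]; omega) h4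
    omega
  have hterm : ∀ v ∈ E,
      (if distDel G (↑E) u v = ⊤ then (0:ℝ)
        else 2 * (1/2:ℝ) ^ (distDel G (↑E) u v).toNat)
        ≤ 2 * (1/2:ℝ) ^ (2 * μ v - 1) := by
    intro v hv
    split_ifs with htop
    · positivity
    · have hmono : G.edist u v ≤ distDel G (↑E) u v := by
        rw [distDel]
        exact edist_anti (fun x y hxy => And.left hxy)
      have h1 : G.dist u v ≤ (distDel G (↑E) u v).toNat :=
        ENat.toNat_le_toNat hmono htop
      have h2 := hdist v hv
      apply mul_le_mul_of_nonneg_left _ (by norm_num : (0:ℝ) ≤ 2)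
      apply pow_le_pow_of_le_one (by norm_num) (by norm_num)
      omega
  have hfib : ∀ m : ℕ, 3 ≤ m → m ≤ d →
      (E.filter (fun v => μ v = m)).card ≤ 4 * 3 ^ (m - 3) := by
    intro m hm3 hmd
    have hcard : (E.filter (fun v => μ v = m)).card
        ≤ (sub G r (anc G r m u) (m - 2)).card := by
      apply Finset.card_le_card_of_injOn (anc G r 2)
      · intro v hv
        rw [Finset.mem_coe, Finset.mem_filter] at hv
        obtain ⟨hvE, hμm⟩ := hv
        obtain ⟨h3, hle, hmem, -⟩ := hμfacts v hvE
        obtain ⟨hvS', -⟩ := hvS v hvE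
        obtain ⟨hvd, -, -⟩ := mem_SS hc ha hleaf hdeg hd hvS'
        rw [Finset.mem_coe, mem_sub]
        constructor
        · have A := anc_depth (r := r) hc ha (x := v) 2 (by omega)
          have B := anc_depth (r := r) hc ha (x := u) m (by omega)
          rw [hvd] at A; rw [hud] at B
          omega
        · rw [anc_add, show m - 2 + 2 = m by omega, ← hμm]
          exact hmem.symm
      · intro a haa b hbb heq
        simp only [Finset.coe_filter, Set.mem_setOf_eq] at haa hbb
        obtain ⟨haE, -⟩ := haa
        obtain ⟨hbE, -⟩ := hbb
        obtain ⟨haS, -⟩ := hvS a haE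
        obtain ⟨hbS, -⟩ := hvS b hbE
        obtain ⟨-, -, hasel⟩ := mem_SS hc ha hleaf hdeg hd haS
        obtain ⟨-, -, hbsel⟩ := mem_SS hc ha hleaf hdeg hd hbS
        rw [← hasel, ← hbsel, heq]
    calc (E.filter (fun v => μ v = m)).card
        ≤ (sub G r (anc G r m u) (m - 2)).card := hcard
      _ = (sub G r (anc G r m u) ((m - 3) + 1)).card := by
          rw [show m - 2 = m - 3 + 1 by omega]
      _ ≤ 4 * 3 ^ (m - 3) := card_sub_le hc ha hdeg _ _
  have hμmaps : ∀ v ∈ E, μ v ∈ Finset.Icc 3 d := by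
    intro v hv
    obtain ⟨h3, hle, -, -⟩ := hμfacts v hv
    rw [Finset.mem_Icc]; exact ⟨h3, hle⟩
  rw [expW]
  calc (∑ v ∈ E, if distDel G (↑E) u v = ⊤ then (0:ℝ)
          else 2 * (1/2:ℝ) ^ (distDel G (↑E) u v).toNat)
      ≤ ∑ v ∈ E, 2 * (1/2:ℝ) ^ (2 * μ v - 1) := Finset.sum_le_sum hterm
    _ = ∑ m ∈ Finset.Icc 3 d, ∑ v ∈ E.filter (fun v => μ v = m),
          2 * (1/2:ℝ) ^ (2 * μ v - 1) :=
        (Finset.sum_fiberwise_of_maps_to hμmaps _).symm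
    _ = ∑ m ∈ Finset.Icc 3 d,
          ((E.filter (fun v => μ v = m)).card : ℝ) * (2 * (1/2:ℝ) ^ (2 * m - 1)) := by
        apply Finset.sum_congr rfl
        intro m hm
        have hcongr : ∀ v ∈ E.filter (fun v => μ v = m),
            2 * (1/2:ℝ) ^ (2 * μ v - 1) = 2 * (1/2:ℝ) ^ (2 * m - 1) := by
          intro v hv
          rw [Finset.mem_filter] at hv
          rw [hv.2]
        rw [Finset.sum_congr rfl hcongr, Finset.sum_const, nsmul_eq_mul]
    _ ≤ ∑ m ∈ Finset.Icc 3 d, (4 * 3 ^ (m - 3) : ℝ) * (2 * (1/2:ℝ) ^ (2 * m - 1)) := by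
        apply Finset.sum_le_sum
        intro m hm
        rw [Finset.mem_Icc] at hm
        have hb := hfib m hm.1 hm.2
        have hpos : (0:ℝ) ≤ 2 * (1/2:ℝ) ^ (2 * m - 1) := by positivity
        apply mul_le_mul_of_nonneg_right _ hpos
        calc ((E.filter (fun v => μ v = m)).card : ℝ)
            ≤ ((4 * 3 ^ (m - 3) : ℕ) : ℝ) := Nat.cast_le.mpr hb
          _ = (4 * 3 ^ (m - 3) : ℝ) := by push_cast; ring
    _ = ∑ j ∈ Finset.range (d - 2), (1/4:ℝ) * (3/4:ℝ)^j := by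
        have hmap : Finset.Icc 3 d
            = Finset.map ⟨fun j => j + 3, fun a b h => Nat.add_right_cancel h⟩ (Finset.range (d - 2)) := by
          ext m
          simp only [Finset.mem_Icc, Finset.mem_map, Finset.mem_range,
            Function.Embedding.coeFn_mk]
          constructor
          · intro h; exact ⟨m - 3, by omega, show m - 3 + 3 = m by omega⟩
          · rintro ⟨j, hj, rfl⟩; exact ⟨show 3 ≤ j + 3 by omega, show j + 3 ≤ d by omega⟩
        rw [hmap, Finset.sum_map]
        apply Finset.sum_congr rfl
        intro j hj
        change (4 * 3 ^ (j + 3 - 3) : ℝ) * (2 * (1/2:ℝ) ^ (2 * (j + 3) - 1)) = _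
        rw [show j + 3 - 3 = j by omega, show 2 * (j + 3) - 1 = 2 * j + 5 by omega]
        have e1 : ((1/2:ℝ)) ^ (2 * j + 5) = (1/4:ℝ)^j * (1/32:ℝ) := by
          rw [pow_add, pow_mul]; norm_num
        have e2 : ((3:ℝ)/4)^j = 3^j * (1/4:ℝ)^j := by
          rw [← mul_pow]; norm_num
        rw [e1, e2]
        ring
    _ = 1 - (3/4:ℝ)^(d - 2) := geo_sum _
    _ < 1 := by
        have : (0:ℝ) < (3/4:ℝ)^(d - 2) := by positivity
        linarith

end Sel
end Struct
end TreeAux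

/-- For every integer `d ≥ 3`, the tree `T(4,d)` satisfies
`α_e(T(4,d)) ≥ (2/3³)·(n(T(4,d)) + 1)`. -/
theorem stmt9 (d : ℕ) (hd : 3 ≤ d) :
    ∀ (V : Type) [Fintype V] (G : SimpleGraph V) (r : V),
      IsTreeTDelta G r 4 d →
      (2 / 3 ^ 3 : ℝ) * ((Fintype.card V : ℝ) + 1) ≤ (expIndepNum V G : ℝ) := by
  obtain ⟨k, rfl⟩ : ∃ k, d = k + 3 := ⟨d - 3, by omega⟩
  intro V _ G r hT
  obtain ⟨hc, ha, hleaf0, hdeg0⟩ := hT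
  have hnc : ∀ v : V, (G.neighborSet v).ncard = G.degree v := by
    intro v
    rw [Set.ncard_eq_toFinset_card', Set.toFinset_card]
    exact G.card_neighborSet_eq_degree v
  have hleaf : ∀ v : V, G.degree v = 1 → G.dist r v = k + 3 := by
    intro v h1
    have h2 := hleaf0 v (by rw [hnc]; exact h1)
    show (G.edist r v).toNat = k + 3
    rw [h2, ENat.toNat_coe]
  have hdeg : ∀ v : V, G.degree v ≠ 1 → G.degree v = 4 := by
    intro v h1
    have h2 := hdeg0 v (by rw [hnc]; exact h1)
    rwa [hnc] at h2
  have hd3 : 3 ≤ k + 3 := by omega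
  have hE := TreeAux.expIndep_SS hc ha hleaf hdeg hd3
  have hmem : (TreeAux.SS G r (k + 3)).card
      ∈ {m : ℕ | ∃ S : Finset V, ExpIndep G S ∧ S.card = m} := ⟨_, hE, rfl⟩
  have hbdd : BddAbove {m : ℕ | ∃ S : Finset V, ExpIndep G S ∧ S.card = m} := by
    refine ⟨Fintype.card V, ?_⟩
    rintro m ⟨S, -, rfl⟩
    exact (Finset.card_le_univ S).trans_eq Finset.card_univ
  have hnum : (TreeAux.SS G r (k + 3)).card ≤ expIndepNum V G := le_csSup hbdd hmem
  have hSS : (TreeAux.SS G r (k + 3)).card = 4 * 3 ^ k := by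
    rw [TreeAux.card_SS hc ha hleaf hdeg hd3,
      TreeAux.card_lvl hc ha hleaf hdeg hd3 (k + 3 - 2) (by omega) (by omega),
      show k + 3 - 2 - 1 = k by omega]
  have hV : Fintype.card V + 1 = 2 * 3 ^ (k + 3) :=
    TreeAux.card_V hc ha hleaf hdeg hd3
  have hcast : ((Fintype.card V : ℝ) + 1) = 2 * 3 ^ (k + 3) := by
    have h := congrArg (Nat.cast : ℕ → ℝ) hV
    push_cast at h
    linarith
  rw [hcast]
  have h2 : (4 * 3 ^ k : ℝ) ≤ (expIndepNum V G : ℝ) := by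
    calc (4 * 3 ^ k : ℝ) = ((4 * 3 ^ k : ℕ) : ℝ) := by push_cast; ring
      _ ≤ _ := Nat.cast_le.mpr (hSS ▸ hnum)
  have h3 : (2 / 3 ^ 3 : ℝ) * (2 * 3 ^ (k + 3)) = 4 * 3 ^ k := by
    rw [pow_add]
    ring
  rw [h3]
  exact h2
end

section
/- For every positive integer k, the set of all k + 2 leaves of the tree T_k is an exponentially independent set in T_k. -/
set_option maxRecDepth 10000
set_option maxHeartbeats 1000000


open SimpleGraph
open scoped Classical

/-- Vertices of the tree `T_k`: `.inl (i, 0) = aᵢ₊₁`, `.inl (i, 1) = bᵢ₊₁`,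
`.inl (i, 2) = cᵢ₊₁` for `i : Fin k`, and `.inr (0, ·)`, `.inr (1, ·)` are the two
further pendant paths attached to `a₁` and `a_k`, respectively. -/
abbrev TkVert (k : ℕ) := (Fin k × Fin 3) ⊕ (Fin 2 × Fin 2)

/-- The tree `T_k`, obtained from the path `a₁ a₂ … a_k` by attaching to each `aᵢ` a
pendant path `aᵢ bᵢ cᵢ`, and attaching to each of `a₁` and `a_k` one further pendant
path on two new vertices; it has order `3k + 4`. -/
def TkGraph (k : ℕ) (hk : 0 < k) : SimpleGraph (TkVert k) :=
  SimpleGraph.fromRel (fun x y =>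
    (∃ i j : Fin k, (i : ℕ) + 1 = (j : ℕ) ∧ x = Sum.inl (i, 0) ∧ y = Sum.inl (j, 0)) ∨
    (∃ i : Fin k, x = Sum.inl (i, 0) ∧ y = Sum.inl (i, 1)) ∨
    (∃ i : Fin k, x = Sum.inl (i, 1) ∧ y = Sum.inl (i, 2)) ∨
    (x = Sum.inl (⟨0, hk⟩, 0) ∧ y = Sum.inr (0, 0)) ∨
    (x = Sum.inl (⟨k - 1, by omega⟩, 0) ∧ y = Sum.inr (1, 0)) ∨
    (∃ j : Fin 2, x = Sum.inr (j, 0) ∧ y = Sum.inr (j, 1)))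

/-- The `k + 2` leaves of `T_k`. -/
def TkLeaves (k : ℕ) : Finset (TkVert k) :=
  (Finset.univ.image fun i : Fin k => (Sum.inl (i, 2) : TkVert k)) ∪
    (Finset.univ.image fun j : Fin 2 => (Sum.inr (j, 1) : TkVert k))


/-! ### Auxiliary lemmas -/

lemma walk_lower {V : Type*} {H : SimpleGraph V} (φ : V → ℕ)
    (hφ : ∀ x y, H.Adj x y → φ y ≤ φ x + 1) {u v : V} (w : H.Walk u v) :
    φ v ≤ φ u + w.length := by
  induction w with
  | nil => simp
  | @cons a b c h w ih =>
    have := hφ a b h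
    simp only [SimpleGraph.Walk.length_cons]
    omega

lemma summand_le {V : Type*} (G : SimpleGraph V) (S : Set V) (u v : V) (φ : V → ℕ)
    (hφ : ∀ x y, G.Adj x y → φ y ≤ φ x + 1) (hu : φ u = 0) :
    (if distDel G S u v = ⊤ then (0:ℝ) else 2 * (1 / 2 : ℝ) ^ (distDel G S u v).toNat)
      ≤ 2 * (1 / 2 : ℝ) ^ (φ v) := by
  split_ifs with h
  · positivity
  · have hφ' : ∀ x y, (G.deleteSet (S \ {u, v})).Adj x y → φ y ≤ φ x + 1 :=
      fun x y hxy => hφ x y hxy.1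
    obtain ⟨w, hw⟩ := SimpleGraph.exists_walk_of_edist_ne_top h
    have h1 : φ v ≤ w.length := by
      have := walk_lower φ hφ' w; omega
    have h2 : (distDel G S u v).toNat = w.length := by
      unfold distDel; rw [← hw]; simp
    rw [h2]
    have := pow_le_pow_of_le_one (by norm_num : (0:ℝ) ≤ 1/2) (by norm_num) h1
    linarith

open Finset in
lemma geom_abs_sum (k p : ℕ) :
    ∑ i ∈ range k, (1/2:ℝ) ^ ((p - i) + (i - p)) ≤ 3 := by
  have split := sum_filter_add_sum_filter_not (range k) (fun i => i ≤ p)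
    (fun i => (1/2:ℝ) ^ ((p - i) + (i - p)))
  rw [← split]
  have h1 : ∑ i ∈ (range k).filter (fun i => i ≤ p), (1/2:ℝ) ^ ((p - i) + (i - p)) ≤ 2 := by
    have e : ∀ i ∈ (range k).filter (fun i => i ≤ p),
        (1/2:ℝ) ^ ((p - i) + (i - p)) = (1/2:ℝ) ^ (p - i) := by
      intro i hi; simp only [mem_filter] at hi; congr 1; omega
    rw [sum_congr rfl e]
    have : ∑ i ∈ (range k).filter (fun i => i ≤ p), (1/2:ℝ) ^ (p - i)
        = ∑ d ∈ ((range k).filter (fun i => i ≤ p)).image (fun i => p - i), (1/2:ℝ) ^ d := by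
      rw [sum_image]
      intro a ha b hb hab
      simp only [mem_coe, mem_filter] at ha hb hab
      omega
    rw [this]
    calc _ ≤ ∑ d ∈ range (p+1), (1/2:ℝ) ^ d := by
            apply sum_le_sum_of_subset_of_nonneg
            · intro d hd
              simp only [mem_image, mem_filter, mem_range] at hd ⊢
              omega
            · intros; positivity
      _ ≤ 2 := sum_geometric_two_le _
  have h2 : ∑ i ∈ (range k).filter (fun i => ¬ i ≤ p), (1/2:ℝ) ^ ((p - i) + (i - p)) ≤ 1 := by
    have e : ∀ i ∈ (range k).filter (fun i => ¬ i ≤ p),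
        (1/2:ℝ) ^ ((p - i) + (i - p)) = (1/2:ℝ) * (1/2:ℝ) ^ (i - p - 1) := by
      intro i hi; simp only [mem_filter] at hi
      rw [← pow_succ']
      congr 1; omega
    rw [sum_congr rfl e, ← mul_sum]
    have : ∑ i ∈ (range k).filter (fun i => ¬ i ≤ p), (1/2:ℝ) ^ (i - p - 1)
        = ∑ d ∈ ((range k).filter (fun i => ¬ i ≤ p)).image (fun i => i - p - 1), (1/2:ℝ) ^ d := by
      rw [sum_image]
      intro a ha b hb hab
      simp only [mem_coe, mem_filter] at ha hb hab
      omega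
    rw [this]
    have hle : ∑ d ∈ ((range k).filter (fun i => ¬ i ≤ p)).image (fun i => i - p - 1), (1/2:ℝ) ^ d
        ≤ ∑ d ∈ range k, (1/2:ℝ) ^ d := by
      apply sum_le_sum_of_subset_of_nonneg
      · intro d hd
        simp only [mem_image, mem_filter, mem_range] at hd ⊢
        omega
      · intros; positivity
    have := sum_geometric_two_le k
    linarith
  linarith

def phiBase (k p : ℕ) : TkVert k → ℕ
  | Sum.inl (j, t) => (p - (j:ℕ)) + ((j:ℕ) - p) + 2 + (t:ℕ)
  | Sum.inr (j, t) => (if (j:ℕ) = 0 then p else k - 1 - p) + 3 + (t:ℕ)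

def phiU (k p : ℕ) (u m x : TkVert k) : ℕ :=
  if x = u then 0 else if x = m then 1 else phiBase k p x

lemma phiU_lip (k : ℕ) (hk : 0 < k) (p : ℕ) (u m : TkVert k)
    (hum : (∃ i : Fin k, (i:ℕ) = p ∧ u = Sum.inl (i, 2) ∧ m = Sum.inl (i, 1)) ∨
      (p = 0 ∧ u = Sum.inr (0, 1) ∧ m = Sum.inr (0, 0)) ∨
      (p = k - 1 ∧ u = Sum.inr (1, 1) ∧ m = Sum.inr (1, 0)))
    (x y : TkVert k) (hxy : (TkGraph k hk).Adj x y) :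
    phiU k p u m y ≤ phiU k p u m x + 1 := by
  rw [TkGraph, fromRel_adj] at hxy
  obtain ⟨hne, h⟩ := hxy
  rcases h with (h | h) <;>
  rcases h with (⟨i, j, hij, rfl, rfl⟩ | ⟨i, rfl, rfl⟩ | ⟨i, rfl, rfl⟩ | ⟨rfl, rfl⟩ | ⟨rfl, rfl⟩ | ⟨j, rfl, rfl⟩) <;>
  rcases hum with (⟨q, rfl, rfl, rfl⟩ | ⟨rfl, rfl, rfl⟩ | ⟨hp, rfl, rfl⟩) <;>
  simp only [phiU, phiBase, Sum.inl.injEq, Sum.inr.injEq, Prod.mk.injEq, Fin.ext_iff,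
    Fin.val_zero, Fin.val_one, Fin.val_two, Fin.val_mk] <;>
  split_ifs <;>
  first
    | omega
    | (simp_all; try omega)

lemma phiU_eq_phiBase (k : ℕ) (p : ℕ) (u m v : TkVert k)
    (hm : (∃ i : Fin k, m = Sum.inl (i, 1)) ∨ (∃ t : Fin 2, m = Sum.inr (t, 0)))
    (hv : v ∈ TkLeaves k) (hvu : v ≠ u) :
    phiU k p u m v = phiBase k p v := by
  simp only [TkLeaves, Finset.mem_union, Finset.mem_image, Finset.mem_univ, true_and] at hv
  rw [phiU, if_neg hvu, if_neg ?_]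
  rcases hv with (⟨i, rfl⟩ | ⟨t, rfl⟩) <;> rcases hm with (⟨a, rfl⟩ | ⟨a, rfl⟩) <;> simp

lemma sum_phiBase (k p : ℕ) :
    ∑ v ∈ TkLeaves k, 2 * (1/2:ℝ) ^ (phiBase k p v) ≤ 7/8 := by
  rw [TkLeaves, Finset.sum_union (by simp [Finset.disjoint_left])]
  have h1 : ∑ v ∈ Finset.univ.image (fun i : Fin k => (Sum.inl (i, 2) : TkVert k)),
      2 * (1/2:ℝ) ^ (phiBase k p v) ≤ 3/8 := by
    rw [Finset.sum_image (by intro a _ b _ h; simpa using h)]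
    have e : ∀ i : Fin k, 2 * (1/2:ℝ) ^ (phiBase k p (Sum.inl (i, 2)))
        = (1/8 : ℝ) * (1/2:ℝ) ^ ((p - (i:ℕ)) + ((i:ℕ) - p)) := by
      intro i
      simp only [phiBase]
      rw [show (p - (i:ℕ)) + ((i:ℕ) - p) + 2 + ((2 : Fin 3):ℕ)
          = ((p - (i:ℕ)) + ((i:ℕ) - p)) + 4 by simp, pow_add]
      ring
    rw [Finset.sum_congr rfl (fun i _ => e i), ← Finset.mul_sum]
    rw [Fin.sum_univ_eq_sum_range (fun n => (1/2:ℝ) ^ ((p - n) + (n - p))) k]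
    have := geom_abs_sum k p
    linarith
  have h2 : ∑ v ∈ Finset.univ.image (fun t : Fin 2 => (Sum.inr (t, 1) : TkVert k)),
      2 * (1/2:ℝ) ^ (phiBase k p v) ≤ 1/4 := by
    rw [Finset.sum_image (by intro a _ b _ h; simpa using h)]
    have e : ∀ t : Fin 2, 2 * (1/2:ℝ) ^ (phiBase k p (Sum.inr (t, 1))) ≤ 1/8 := by
      intro t
      have h4 : 4 ≤ phiBase k p (Sum.inr (t, 1)) := by
        simp only [phiBase]; split_ifs <;> simp <;> omega
      have := pow_le_pow_of_le_one (by norm_num : (0:ℝ) ≤ 1/2) (by norm_num) h4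
      calc 2 * (1/2:ℝ) ^ (phiBase k p (Sum.inr (t, 1))) ≤ 2 * (1/2:ℝ)^4 := by linarith
        _ = 1/8 := by norm_num
    calc ∑ t : Fin 2, 2 * (1/2:ℝ) ^ (phiBase k p (Sum.inr (t, 1)))
        ≤ ∑ _t : Fin 2, (1/8 : ℝ) := Finset.sum_le_sum (fun t _ => e t)
      _ = 1/4 := by simp; norm_num
  linarith

lemma nbr_c (k : ℕ) (hk : 0 < k) (i : Fin k) :
    (TkGraph k hk).neighborSet (Sum.inl (i, 2)) = {Sum.inl (i, 1)} := by
  ext y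
  simp only [mem_neighborSet, TkGraph, fromRel_adj, Set.mem_singleton_iff]
  constructor
  · rintro ⟨hne, (h | h)⟩ <;>
      rcases h with (⟨a, b, hab, h1, h2⟩ | ⟨a, h1, h2⟩ | ⟨a, h1, h2⟩ | ⟨h1, h2⟩ | ⟨h1, h2⟩ | ⟨a, h1, h2⟩) <;>
      simp_all
  · rintro rfl
    exact ⟨by simp, Or.inr (Or.inr (Or.inr (Or.inl ⟨i, rfl, rfl⟩)))⟩

lemma nbr_p (k : ℕ) (hk : 0 < k) (t : Fin 2) :
    (TkGraph k hk).neighborSet (Sum.inr (t, 1)) = {Sum.inr (t, 0)} := by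
  ext y
  simp only [mem_neighborSet, TkGraph, fromRel_adj, Set.mem_singleton_iff]
  constructor
  · rintro ⟨hne, (h | h)⟩ <;>
      rcases h with (⟨a, b, hab, h1, h2⟩ | ⟨a, h1, h2⟩ | ⟨a, h1, h2⟩ | ⟨h1, h2⟩ | ⟨h1, h2⟩ | ⟨a, h1, h2⟩) <;>
      simp_all
  · rintro rfl
    exact ⟨by simp, Or.inr (Or.inr (Or.inr (Or.inr (Or.inr (Or.inr ⟨t, rfl, rfl⟩)))))⟩

lemma two_nbrs {V : Type*} [Fintype V] (G : SimpleGraph V) (v a b : V)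
    (ha : G.Adj v a) (hb : G.Adj v b) (hab : a ≠ b) : 1 < (G.neighborSet v).ncard := by
  rw [Set.one_lt_ncard_iff (Set.toFinite _)]
  exact ⟨a, b, ha, hb, hab⟩

lemma deg_a (k : ℕ) (hk : 0 < k) (i : Fin k) :
    1 < ((TkGraph k hk).neighborSet (Sum.inl (i, 0))).ncard := by
  have hb : (TkGraph k hk).Adj (Sum.inl (i, 0)) (Sum.inl (i, 1)) := by
    rw [TkGraph, fromRel_adj]
    exact ⟨by simp, Or.inl (Or.inr (Or.inl ⟨i, rfl, rfl⟩))⟩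
  by_cases h : (i:ℕ) + 1 < k
  · refine two_nbrs _ _ (Sum.inl (⟨(i:ℕ)+1, h⟩, 0)) (Sum.inl (i, 1)) ?_ hb (by simp)
    rw [TkGraph, fromRel_adj]
    refine ⟨by simp [Fin.ext_iff], Or.inl (Or.inl ⟨i, ⟨(i:ℕ)+1, h⟩, rfl, rfl, rfl⟩)⟩
  · have hik : (i:ℕ) = k - 1 := by have := i.isLt; omega
    refine two_nbrs _ _ (Sum.inr (1, 0)) (Sum.inl (i, 1)) ?_ hb (by simp)
    rw [TkGraph, fromRel_adj]
    have : i = (⟨k - 1, by omega⟩ : Fin k) := Fin.ext hik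
    refine ⟨by simp, Or.inl (Or.inr (Or.inr (Or.inr (Or.inr (Or.inl ⟨by rw [this], rfl⟩)))))⟩

lemma deg_b (k : ℕ) (hk : 0 < k) (i : Fin k) :
    1 < ((TkGraph k hk).neighborSet (Sum.inl (i, 1))).ncard := by
  refine two_nbrs _ _ (Sum.inl (i, 0)) (Sum.inl (i, 2)) ?_ ?_ (by simp) <;>
    rw [TkGraph, fromRel_adj]
  · exact ⟨by simp, Or.inr (Or.inr (Or.inl ⟨i, rfl, rfl⟩))⟩
  · exact ⟨by simp, Or.inl (Or.inr (Or.inr (Or.inl ⟨i, rfl, rfl⟩)))⟩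

lemma deg_x (k : ℕ) (hk : 0 < k) (t : Fin 2) :
    1 < ((TkGraph k hk).neighborSet (Sum.inr (t, 0))).ncard := by
  have hb : (TkGraph k hk).Adj (Sum.inr (t, 0)) (Sum.inr (t, 1)) := by
    rw [TkGraph, fromRel_adj]
    exact ⟨by simp, Or.inl (Or.inr (Or.inr (Or.inr (Or.inr (Or.inr ⟨t, rfl, rfl⟩)))))⟩
  fin_cases t
  · refine two_nbrs _ _ (Sum.inl (⟨0, hk⟩, 0)) (Sum.inr (0, 1)) ?_ hb (by simp)
    rw [TkGraph, fromRel_adj]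
    exact ⟨by simp, Or.inr (Or.inr (Or.inr (Or.inr (Or.inl ⟨rfl, rfl⟩))))⟩
  · refine two_nbrs _ _ (Sum.inl (⟨k-1, by omega⟩, 0)) (Sum.inr (1, 1)) ?_ hb (by simp)
    rw [TkGraph, fromRel_adj]
    exact ⟨by simp, Or.inr (Or.inr (Or.inr (Or.inr (Or.inr (Or.inl ⟨rfl, rfl⟩)))))⟩

lemma expW_lt (k : ℕ) (hk : 0 < k) (u : TkVert k) (hu : u ∈ TkLeaves k)
    (p : ℕ) (m : TkVert k)
    (hum : (∃ i : Fin k, (i:ℕ) = p ∧ u = Sum.inl (i, 2) ∧ m = Sum.inl (i, 1)) ∨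
      (p = 0 ∧ u = Sum.inr (0, 1) ∧ m = Sum.inr (0, 0)) ∨
      (p = k - 1 ∧ u = Sum.inr (1, 1) ∧ m = Sum.inr (1, 0)))
    (inst : DecidableEq (TkVert k)) :
    expW (TkGraph k hk) ((@Finset.erase (TkVert k) inst (TkLeaves k) u)) u < 1 := by
  have hu0 : phiU k p u m u = 0 := by rw [phiU, if_pos rfl]
  have hm : (∃ i : Fin k, m = Sum.inl (i, 1)) ∨ (∃ t : Fin 2, m = Sum.inr (t, 0)) := by
    rcases hum with (⟨i, _, _, rfl⟩ | ⟨_, _, rfl⟩ | ⟨_, _, rfl⟩)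
    exacts [Or.inl ⟨i, rfl⟩, Or.inr ⟨0, rfl⟩, Or.inr ⟨1, rfl⟩]
  calc expW (TkGraph k hk) ((@Finset.erase (TkVert k) inst (TkLeaves k) u)) u
      ≤ ∑ v ∈ (@Finset.erase (TkVert k) inst (TkLeaves k) u), 2 * (1/2:ℝ) ^ (phiU k p u m v) := by
        apply Finset.sum_le_sum
        intro v _
        exact summand_le _ _ _ _ _ (phiU_lip k hk p u m hum) hu0
    _ = ∑ v ∈ (@Finset.erase (TkVert k) inst (TkLeaves k) u), 2 * (1/2:ℝ) ^ (phiBase k p v) := by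
        apply Finset.sum_congr rfl
        intro v hv
        rw [Finset.mem_erase] at hv
        rw [phiU_eq_phiBase k p u m v hm hv.2 hv.1]
    _ ≤ ∑ v ∈ TkLeaves k, 2 * (1/2:ℝ) ^ (phiBase k p v) := by
        apply Finset.sum_le_sum_of_subset_of_nonneg (Finset.erase_subset _ _)
        intros; positivity
    _ ≤ 7/8 := sum_phiBase k p
    _ < 1 := by norm_num

/-- For every positive integer `k`, the set of all `k + 2` leaves of the tree `T_k` is
an exponentially independent set in `T_k`. -/
theorem stmt10 (k : ℕ) (hk : 0 < k) :
    (∀ v : TkVert k, v ∈ TkLeaves k ↔ ((TkGraph k hk).neighborSet v).ncard = 1) ∧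
    (TkLeaves k).card = k + 2 ∧
    ExpIndep (TkGraph k hk) (TkLeaves k) := by
  refine ⟨?_, ?_, ?_⟩
  · rintro (⟨i, t⟩ | ⟨t, s⟩)
    · have ht := t.isLt
      have h3 : t = 0 ∨ t = 1 ∨ t = 2 := by
        rcases (by omega : (t:ℕ) = 0 ∨ (t:ℕ) = 1 ∨ (t:ℕ) = 2) with (h | h | h)
        exacts [Or.inl (Fin.ext h), Or.inr (Or.inl (Fin.ext h)), Or.inr (Or.inr (Fin.ext h))]
      rcases h3 with rfl | rfl | rfl
      · have := deg_a k hk i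
        simp only [TkLeaves, Finset.mem_union, Finset.mem_image, Finset.mem_univ, true_and]
        constructor
        · rintro (⟨a, h⟩ | ⟨a, h⟩) <;> simp_all
        · intro h; exact absurd h (by omega)
      · have := deg_b k hk i
        simp only [TkLeaves, Finset.mem_union, Finset.mem_image, Finset.mem_univ, true_and]
        constructor
        · rintro (⟨a, h⟩ | ⟨a, h⟩) <;> simp_all
        · intro h; exact absurd h (by omega)
      · constructor
        · intro _; rw [nbr_c k hk i, Set.ncard_singleton]
        · intro _
          simp [TkLeaves]
    · have hs := s.isLt
      have h2 : s = 0 ∨ s = 1 := by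
        rcases (by omega : (s:ℕ) = 0 ∨ (s:ℕ) = 1) with (h | h)
        exacts [Or.inl (Fin.ext h), Or.inr (Fin.ext h)]
      rcases h2 with rfl | rfl
      · have := deg_x k hk t
        simp only [TkLeaves, Finset.mem_union, Finset.mem_image, Finset.mem_univ, true_and]
        constructor
        · rintro (⟨a, h⟩ | ⟨a, h⟩) <;> simp_all
        · intro h; exact absurd h (by omega)
      · constructor
        · intro _; rw [nbr_p k hk t, Set.ncard_singleton]
        · intro _
          simp [TkLeaves]
  · rw [TkLeaves, Finset.card_union_of_disjoint (by simp [Finset.disjoint_left]),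
      Finset.card_image_of_injective _ (fun a b h => by simpa using h),
      Finset.card_image_of_injective _ (fun a b h => by simpa using h)]
    simp
  · intro u hu
    simp only [TkLeaves, Finset.mem_union, Finset.mem_image, Finset.mem_univ, true_and] at hu
    rcases hu with (⟨i, rfl⟩ | ⟨t, rfl⟩)
    · exact expW_lt k hk _ (by simp [TkLeaves]) (i:ℕ) (Sum.inl (i, 1))
        (Or.inl ⟨i, rfl, rfl, rfl⟩) _
    · have ht := t.isLt
      have h2 : t = 0 ∨ t = 1 := by
        rcases (by omega : (t:ℕ) = 0 ∨ (t:ℕ) = 1) with (h | h)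
        exacts [Or.inl (Fin.ext h), Or.inr (Fin.ext h)]
      rcases h2 with rfl | rfl
      · exact expW_lt k hk _ (by simp [TkLeaves]) 0 (Sum.inr (0, 0))
          (Or.inr (Or.inl ⟨rfl, rfl, rfl⟩)) _
      · exact expW_lt k hk _ (by simp [TkLeaves]) (k-1) (Sum.inr (1, 0))
          (Or.inr (Or.inr ⟨rfl, rfl, rfl⟩)) _
end

section
/- For every positive integer k, the exponential independence number of the tree T_k equals (n(T_k) + 2)/3 = k + 2. -/
open SimpleGraph
open scoped Classical

variable {V : Type*} {G : SimpleGraph V} {S : Set V} {u v : V}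

lemma distDel_le_one (h : G.Adj u v) : distDel G S u v ≤ 1 := by
  have : (G.deleteSet (S \ {u, v})).Adj u v := by
    refine (⟨h, ?_, ?_⟩ : G.Adj u v ∧ u ∉ S \ {u, v} ∧ v ∉ S \ {u, v}) <;> simp [Set.mem_diff]
  simpa [distDel] using (SimpleGraph.edist_le this.toWalk)

lemma distDel_le_two (m : V) (h1 : G.Adj u m) (h2 : G.Adj m v) (hm : m ∉ S) :
    distDel G S u v ≤ 2 := by
  have hmem : ∀ x : V, x ∈ ({u, v} : Set V) ∨ x ∉ S → x ∉ S \ {u, v} := by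
    intro x hx hc
    rcases hx with h | h
    · exact hc.2 h
    · exact h hc.1
  have a1 : (G.deleteSet (S \ {u, v})).Adj u m :=
    (⟨h1, hmem u (Or.inl (by simp)), hmem m (Or.inr hm)⟩ : G.Adj u m ∧ _ ∧ _)
  have a2 : (G.deleteSet (S \ {u, v})).Adj m v :=
    (⟨h2, hmem m (Or.inr hm), hmem v (Or.inl (by simp))⟩ : G.Adj m v ∧ _ ∧ _)
  rw [distDel]
  refine le_trans (SimpleGraph.edist_le (.cons a1 (.cons a2 .nil))) ?_
  simp

lemma distDel_le_three (m₁ m₂ : V) (h1 : G.Adj u m₁) (h2 : G.Adj m₁ m₂) (h3 : G.Adj m₂ v)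
    (hm1 : m₁ ∉ S) (hm2 : m₂ ∉ S) : distDel G S u v ≤ 3 := by
  have hmem : ∀ x : V, x ∈ ({u, v} : Set V) ∨ x ∉ S → x ∉ S \ {u, v} := by
    intro x hx hc
    rcases hx with h | h
    · exact hc.2 h
    · exact h hc.1
  have a1 : (G.deleteSet (S \ {u, v})).Adj u m₁ :=
    (⟨h1, hmem u (Or.inl (by simp)), hmem m₁ (Or.inr hm1)⟩ : G.Adj u m₁ ∧ _ ∧ _)
  have a2 : (G.deleteSet (S \ {u, v})).Adj m₁ m₂ :=
    (⟨h2, hmem m₁ (Or.inr hm1), hmem m₂ (Or.inr hm2)⟩ : G.Adj m₁ m₂ ∧ _ ∧ _)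
  have a3 : (G.deleteSet (S \ {u, v})).Adj m₂ v :=
    (⟨h3, hmem m₂ (Or.inr hm2), hmem v (Or.inl (by simp))⟩ : G.Adj m₂ v ∧ _ ∧ _)
  rw [distDel]
  refine le_trans (SimpleGraph.edist_le (.cons a1 (.cons a2 (.cons a3 .nil)))) ?_
  simp

lemma walk_natAbs {H : SimpleGraph V} (f : V → ℤ) (hf : ∀ x y, H.Adj x y → |f x - f y| ≤ 1) :
    ∀ {a b : V} (p : H.Walk a b), (f a - f b).natAbs ≤ p.length := by
  intro a b p
  induction p with
  | nil => simp
  | cons h q ih =>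
    rename_i x y z
    have hab : |f x - f y| ≤ 1 := hf x y h
    rw [abs_le] at hab
    simp only [SimpleGraph.Walk.length_cons]
    omega

/-- Lipschitz lower bound for distDel. -/
lemma distDel_lower (f : V → ℤ) (hf : ∀ x y, G.Adj x y → |f x - f y| ≤ 1) :
    ((f u - f v).natAbs : ℕ∞) ≤ distDel G S u v := by
  by_cases htop : distDel G S u v = ⊤
  · simp [htop]
  · obtain ⟨p, hp⟩ := SimpleGraph.exists_walk_of_edist_ne_top htop
    rw [distDel] at *
    rw [← hp]
    norm_cast
    exact walk_natAbs (H := G.deleteSet (S \ {u, v})) f (fun x y hxy => hf x y (show G.Adj x y ∧ x ∉ S \ {u, v} ∧ y ∉ S \ {u, v} from hxy).1) p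

lemma expW_term_nonneg (G : SimpleGraph V) (S : Finset V) (u v : V) :
    (0:ℝ) ≤ if distDel G (↑S) u v = ⊤ then 0
      else 2 * (1 / 2 : ℝ) ^ (distDel G (↑S) u v).toNat := by
  split <;> positivity

lemma expW_ge_sum {G : SimpleGraph V} {S T : Finset V} {u : V} (lb : V → ℕ)
    (hT : T ⊆ S) (h : ∀ v ∈ T, distDel G (↑S) u v ≤ (lb v : ℕ∞)) :
    ∑ v ∈ T, 2 * (1 / 2 : ℝ) ^ (lb v) ≤ expW G S u := by
  rw [expW]
  refine le_trans (Finset.sum_le_sum ?_) (Finset.sum_le_sum_of_subset_of_nonneg hT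
    (fun v _ _ => expW_term_nonneg G S u v))
  intro v hv
  have hle := h v hv
  have hne : distDel G (↑S) u v ≠ ⊤ := by
    intro hc; rw [hc] at hle; exact (by simp : ¬ (⊤:ℕ∞) ≤ (lb v : ℕ∞)) hle
  rw [if_neg hne]
  have htn : (distDel G (↑S) u v).toNat ≤ lb v := by
    lift distDel G (↑S) u v to ℕ using hne with d hd
    simpa using hle
  have : (1/2:ℝ)^(lb v) ≤ (1/2:ℝ)^((distDel G (↑S) u v).toNat) :=
    pow_le_pow_of_le_one (by norm_num) (by norm_num) htn
  linarith

lemma expW_le_sum {G : SimpleGraph V} {S : Finset V} {u : V} (lb : V → ℕ)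
    (h : ∀ v ∈ S, (lb v : ℕ∞) ≤ distDel G (↑S) u v) :
    expW G S u ≤ ∑ v ∈ S, 2 * (1 / 2 : ℝ) ^ (lb v) := by
  rw [expW]
  refine Finset.sum_le_sum ?_
  intro v hv
  split
  · positivity
  · rename_i hne
    have htn : lb v ≤ (distDel G (↑S) u v).toNat := by
      have hle := h v hv
      lift distDel G (↑S) u v to ℕ using hne with d hd
      simpa using hle
    have : (1/2:ℝ)^((distDel G (↑S) u v).toNat) ≤ (1/2:ℝ)^(lb v) :=
      pow_le_pow_of_le_one (by norm_num) (by norm_num) htn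
    linarith

lemma erase_classical_eq {W : Type*} [inst : DecidableEq W] (S : Finset W) (u : W) :
    @Finset.erase W (fun a b => Classical.propDecidable (a = b)) S u = S.erase u := by
  rw [Subsingleton.elim (fun a b => Classical.propDecidable (a = b) : DecidableEq W) inst]

lemma not_adj_of_expIndep {G : SimpleGraph V} {S : Finset V} (hS : ExpIndep G S)
    {u v : V} (hu : u ∈ S) (hv : v ∈ S) (h : G.Adj u v) : False := by
  have hv' : v ∈ S.erase u := Finset.mem_erase.mpr ⟨fun he => (he ▸ h).ne rfl, hv⟩
  have hle : distDel G (↑(S.erase u)) u v ≤ (1:ℕ) := by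
    simpa using distDel_le_one (S := ↑(S.erase u)) h
  have := expW_ge_sum (G := G) (S := S.erase u) (T := {v}) (u := u) (fun _ => 1)
    (by simpa using hv') (by intro w hw; simp at hw; subst hw; exact hle)
  simp at this
  have h2 := hS u hu
  norm_num at this
  linarith

lemma fromRel_lip {V : Type*} {rel : V → V → Prop} (f : V → ℤ)
    (h : ∀ x y, rel x y → |f x - f y| ≤ 1) :
    ∀ x y, (SimpleGraph.fromRel rel).Adj x y → |f x - f y| ≤ 1 := by
  intro x y hxy
  rw [SimpleGraph.fromRel_adj] at hxy
  rcases hxy.2 with hr | hr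
  · exact h _ _ hr
  · rw [abs_sub_comm]; exact h _ _ hr

def f1 (k : ℕ) (i : ℕ) : TkVert k → ℤ
  | .inl (j, t) => if (j:ℕ) = i then 2 - (t:ℕ) else (((i:ℤ) - (j:ℕ)).natAbs : ℤ) + 2 + (t:ℕ)
  | .inr (j, t) => if (j:ℕ) = 0 then (i:ℤ) + 3 + (t:ℕ) else ((k:ℤ) - 1 - (i:ℕ)) + 3 + (t:ℕ)

lemma lip1 (k : ℕ) (hk : 0 < k) (i : ℕ) (hi : i < k) :
    ∀ x y, (TkGraph k hk).Adj x y → |f1 k i x - f1 k i y| ≤ 1 := by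
  apply fromRel_lip
  intro x y hr
  rcases hr with ⟨a, b, hab, rfl, rfl⟩ | ⟨a, rfl, rfl⟩ | ⟨a, rfl, rfl⟩ |
    ⟨rfl, rfl⟩ | ⟨rfl, rfl⟩ | ⟨a, rfl, rfl⟩ <;>
    simp only [f1] <;>
    (try have h2 := a.2) <;> (try have h3 := b.2) <;> (try split_ifs) <;>
    rw [abs_le] <;> simp only [Fin.isValue, Fin.val_zero, Fin.val_one, Fin.val_two] <;> omega

def f2 (k : ℕ) : TkVert k → ℤ
  | .inl (j, t) => (j:ℕ) + 2 + (t:ℕ)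
  | .inr (j, t) => if (j:ℕ) = 0 then 1 - (t:ℕ) else (k:ℤ) + 2 + (t:ℕ)

def f3 (k : ℕ) : TkVert k → ℤ
  | .inl (j, t) => ((k:ℤ) - 1 - (j:ℕ)) + 2 + (t:ℕ)
  | .inr (j, t) => if (j:ℕ) = 0 then (k:ℤ) + 2 + (t:ℕ) else 1 - (t:ℕ)

lemma lip2 (k : ℕ) (hk : 0 < k) :
    ∀ x y, (TkGraph k hk).Adj x y → |f2 k x - f2 k y| ≤ 1 := by
  apply fromRel_lip
  intro x y hr
  rcases hr with ⟨a, b, hab, rfl, rfl⟩ | ⟨a, rfl, rfl⟩ | ⟨a, rfl, rfl⟩ |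
    ⟨rfl, rfl⟩ | ⟨rfl, rfl⟩ | ⟨a, rfl, rfl⟩ <;>
    simp only [f2] <;>
    (try have h2 := a.2) <;> (try have h3 := b.2) <;> (try split_ifs) <;>
    rw [abs_le] <;> simp only [Fin.isValue, Fin.val_zero, Fin.val_one, Fin.val_two] <;> omega

lemma lip3 (k : ℕ) (hk : 0 < k) :
    ∀ x y, (TkGraph k hk).Adj x y → |f3 k x - f3 k y| ≤ 1 := by
  apply fromRel_lip
  intro x y hr
  rcases hr with ⟨a, b, hab, rfl, rfl⟩ | ⟨a, rfl, rfl⟩ | ⟨a, rfl, rfl⟩ |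
    ⟨rfl, rfl⟩ | ⟨rfl, rfl⟩ | ⟨a, rfl, rfl⟩ <;>
    simp only [f3] <;>
    (try have h2 := a.2) <;> (try have h3 := b.2) <;> (try split_ifs) <;>
    rw [abs_le] <;> simp only [Fin.isValue, Fin.val_zero, Fin.val_one, Fin.val_two] <;> omega

lemma tkLeaves_card (k : ℕ) : (TkLeaves k).card = k + 2 := by
  rw [TkLeaves, Finset.card_union_of_disjoint]
  · rw [Finset.card_image_of_injective _ (by intro x y h; simpa using h),
      Finset.card_image_of_injective _ (by intro x y h; simpa using h)]
    simp
  · simp [Finset.disjoint_left]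

lemma half_sum (n : ℕ) : ∑ j ∈ Finset.range n, (1/2:ℝ)^(j+1) = 1 - (1/2)^n := by
  induction n with
  | zero => simp
  | succ m ih => rw [Finset.sum_range_succ, ih]; ring

lemma half_pow_pos (n : ℕ) : (0:ℝ) < (1/2)^n := by positivity

lemma half_pow_le {n m : ℕ} (h : n ≤ m) : (1/2:ℝ)^m ≤ (1/2)^n :=
  pow_le_pow_of_le_one (by norm_num) (by norm_num) h

lemma geo2 (k i : ℕ) (hi : i < k) :
    ∑ j ∈ (Finset.range k).erase i, (1/2:ℝ)^(((i:ℤ) - (j:ℕ)).natAbs) < 2 := by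
  have hsplit : (Finset.range k).erase i = Finset.range i ∪ Finset.Ico (i+1) k := by
    ext j
    simp only [Finset.mem_erase, Finset.mem_range, Finset.mem_union, Finset.mem_Ico]
    omega
  have hdisj : Disjoint (Finset.range i) (Finset.Ico (i+1) k) := by
    rw [Finset.disjoint_left]
    intro j h1 h2
    simp only [Finset.mem_range, Finset.mem_Ico] at h1 h2
    omega
  rw [hsplit, Finset.sum_union hdisj]
  have e1 : ∑ j ∈ Finset.range i, (1/2:ℝ)^(((i:ℤ) - (j:ℕ)).natAbs)
      = ∑ j ∈ Finset.range i, (1/2:ℝ)^(i - j) := by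
    refine Finset.sum_congr rfl fun j hj => ?_
    simp only [Finset.mem_range] at hj
    congr 1
    omega
  have e2 : ∑ j ∈ Finset.range i, (1/2:ℝ)^(i - j)
      = ∑ j ∈ Finset.range i, (1/2:ℝ)^(j+1) := by
    rw [← Finset.sum_range_reflect]
    refine Finset.sum_congr rfl fun j hj => ?_
    simp only [Finset.mem_range] at hj
    congr 1
    omega
  have e3 : ∑ j ∈ Finset.Ico (i+1) k, (1/2:ℝ)^(((i:ℤ) - (j:ℕ)).natAbs)
      = ∑ j ∈ Finset.range (k - (i+1)), (1/2:ℝ)^(j+1) := by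
    rw [Finset.sum_Ico_eq_sum_range]
    refine Finset.sum_congr rfl fun j hj => ?_
    congr 1
    omega
  rw [e1, e2, e3, half_sum, half_sum]
  have := half_pow_pos i
  have := half_pow_pos (k - (i+1))
  linarith

lemma leaves_sum_repr (k : ℕ) (g : TkVert k → ℝ) :
    ∑ v ∈ TkLeaves k, g v
      = (∑ i : Fin k, g (Sum.inl (i,2))) + ∑ j : Fin 2, g (Sum.inr (j,1)) := by
  rw [TkLeaves, Finset.sum_union (by simp [Finset.disjoint_left]),
    Finset.sum_image (by intro x _ y _ h; simpa using h),
    Finset.sum_image (by intro x _ y _ h; simpa using h)]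

lemma expW_leaves_le (k : ℕ) (hk : 0 < k) (f : TkVert k → ℤ)
    (hf : ∀ x y, (TkGraph k hk).Adj x y → |f x - f y| ≤ 1)
    (u : TkVert k) (hu : u ∈ TkLeaves k) :
    expW (TkGraph k hk) ((TkLeaves k).erase u) u
      ≤ (∑ i : Fin k, 2 * (1/2:ℝ)^((f u - f (Sum.inl (i,2))).natAbs))
        + (∑ j : Fin 2, 2 * (1/2:ℝ)^((f u - f (Sum.inr (j,1))).natAbs)) - 2 := by
  have key := expW_le_sum (G := TkGraph k hk) (S := (TkLeaves k).erase u) (u := u)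
    (fun v => (f u - f v).natAbs)
    (fun v _ => distDel_lower f hf)
  have hrepr := leaves_sum_repr k (fun v => 2 * (1/2:ℝ)^((f u - f v).natAbs))
  have herase := Finset.add_sum_erase (TkLeaves k)
    (fun v => 2 * (1/2:ℝ)^((f u - f v).natAbs)) hu
  simp only [sub_self, Int.natAbs_zero, pow_zero, mul_one] at herase
  rw [hrepr] at herase
  linarith

lemma sum_two_bound (k : ℕ) (x y : ℕ) (hx : 4 ≤ x) (hy : 4 ≤ y) :
    2 * (1/2:ℝ)^x + 2 * (1/2:ℝ)^y ≤ 1/4 := by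
  have b0 : (1/2:ℝ)^x ≤ (1/2:ℝ)^4 := half_pow_le hx
  have b1 : (1/2:ℝ)^y ≤ (1/2:ℝ)^4 := half_pow_le hy
  norm_num at b0 b1 ⊢
  linarith

lemma tail_geo_bound (k i : ℕ) (hi : i < k) :
    ∑ j ∈ (Finset.range k).erase i, 2 * (1/2:ℝ)^((((i:ℕ):ℤ) - j).natAbs + 4) ≤ 1/4 := by
  have hcong : ∀ j ∈ (Finset.range k).erase i,
      2 * (1/2:ℝ)^((((i:ℕ):ℤ) - j).natAbs + 4)
      = (2 * (1/2:ℝ)^4) * (1/2:ℝ)^((((i:ℕ):ℤ) - j).natAbs) := by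
    intro j _
    rw [pow_add]
    ring
  rw [Finset.sum_congr rfl hcong, ← Finset.mul_sum]
  have hgeo := geo2 k i hi
  nlinarith [hgeo]

lemma head_geo_bound (k : ℕ) : ∑ j ∈ Finset.range k, 2 * (1/2:ℝ)^(j + 4) ≤ 1/4 := by
  have hcong : ∀ j ∈ Finset.range k,
      2 * (1/2:ℝ)^(j+4) = (2 * (1/2:ℝ)^3) * (1/2:ℝ)^(j+1) := by
    intro j _
    rw [show j + 4 = (j+1) + 3 by omega, pow_add]
    ring
  rw [Finset.sum_congr rfl hcong, ← Finset.mul_sum, half_sum]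
  nlinarith [half_pow_pos k]

lemma tkLeaves_expIndep (k : ℕ) (hk : 0 < k) : ExpIndep (TkGraph k hk) (TkLeaves k) := by
  intro u hu
  rw [erase_classical_eq]
  have hu' := hu
  rw [TkLeaves, Finset.mem_union] at hu'
  rcases hu' with hu' | hu'
  · -- u = c_i
    obtain ⟨i, _, rfl⟩ := Finset.mem_image.mp hu'
    have key := expW_leaves_le k hk (f1 k i) (lip1 k hk i i.2) _ hu
    have hAe : ∀ i' : Fin k,
        ((f1 k ↑i (Sum.inl (i,2)) - f1 k ↑i (Sum.inl (i',2))).natAbs)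
        = (if (i':ℕ) = (i:ℕ) then 0 else (((i:ℕ):ℤ) - (i':ℕ)).natAbs + 4) := by
      intro i'
      simp [f1, -Int.natCast_natAbs, abs_eq_max_neg, max_def]
      (try split_ifs) <;> omega
    have hAsum : ∑ i' : Fin k,
        2 * (1/2:ℝ)^((f1 k ↑i (Sum.inl (i,2)) - f1 k ↑i (Sum.inl (i',2))).natAbs)
        = ∑ j ∈ Finset.range k,
            2 * (1/2:ℝ)^(if j = (i:ℕ) then 0 else (((i:ℕ):ℤ) - j).natAbs + 4) := by
      rw [Finset.sum_congr rfl (fun i' _ => by rw [hAe i'])]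
      exact Fin.sum_univ_eq_sum_range
        (fun j => 2 * (1/2:ℝ)^(if j = (i:ℕ) then 0 else (((i:ℕ):ℤ) - j).natAbs + 4)) k
    have hmem : (i:ℕ) ∈ Finset.range k := Finset.mem_range.mpr i.2
    have hsplit := Finset.add_sum_erase (Finset.range k)
      (fun j => 2 * (1/2:ℝ)^(if j = (i:ℕ) then 0 else (((i:ℕ):ℤ) - j).natAbs + 4)) hmem
    have htail : ∑ j ∈ (Finset.range k).erase (i:ℕ),
        2 * (1/2:ℝ)^(if j = (i:ℕ) then 0 else (((i:ℕ):ℤ) - j).natAbs + 4)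
        = ∑ j ∈ (Finset.range k).erase (i:ℕ),
            2 * (1/2:ℝ)^((((i:ℕ):ℤ) - j).natAbs + 4) := by
      refine Finset.sum_congr rfl fun j hj => ?_
      rw [if_neg (Finset.mem_erase.mp hj).1]
    have hA2 : ∑ i' : Fin k,
        2 * (1/2:ℝ)^((f1 k ↑i (Sum.inl (i,2)) - f1 k ↑i (Sum.inl (i',2))).natAbs)
        ≤ 2 + 1/4 := by
      rw [hAsum, ← hsplit]
      simp only [eq_self_iff_true, if_true, ite_true, pow_zero, mul_one]
      rw [htail]
      have := tail_geo_bound k (i:ℕ) i.2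
      linarith
    have e0 : ((f1 k ↑i (Sum.inl (i,2)) - f1 k ↑i (Sum.inr (0,1))).natAbs) = (i:ℕ) + 4 := by
      simp [f1, -Int.natCast_natAbs]
      (try split_ifs) <;> omega
    have e1 : ((f1 k ↑i (Sum.inl (i,2)) - f1 k ↑i (Sum.inr (1,1))).natAbs)
        = (k - 1 - (i:ℕ)) + 4 := by
      have := i.2
      simp [f1, -Int.natCast_natAbs]
      (try split_ifs) <;> omega
    have hB : ∑ j : Fin 2,
        2 * (1/2:ℝ)^((f1 k ↑i (Sum.inl (i,2)) - f1 k ↑i (Sum.inr (j,1))).natAbs) ≤ 1/4 := by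
      rw [Fin.sum_univ_two, e0, e1]
      exact sum_two_bound k _ _ (by omega) (by omega)
    refine lt_of_le_of_lt key ?_
    linarith [hA2, hB]
  · -- u = inr (m, 1)
    obtain ⟨m, _, rfl⟩ := Finset.mem_image.mp hu'
    have hm01 : m = 0 ∨ m = 1 := by omega
    rcases hm01 with rfl | rfl
    · -- m = 0, use f2
      have key := expW_leaves_le k hk (f2 k) (lip2 k hk) _ hu
      have hAe : ∀ i' : Fin k,
          ((f2 k (Sum.inr (0,1)) - f2 k (Sum.inl (i',2))).natAbs) = (i':ℕ) + 4 := by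
        intro i'
        simp [f2, -Int.natCast_natAbs]
        (try split_ifs) <;> omega
      have hA2 : ∑ i' : Fin k,
          2 * (1/2:ℝ)^((f2 k (Sum.inr (0,1)) - f2 k (Sum.inl (i',2))).natAbs) ≤ 1/4 := by
        rw [Finset.sum_congr rfl (fun i' _ => by rw [hAe i']),
          Fin.sum_univ_eq_sum_range (fun j => 2 * (1/2:ℝ)^(j+4)) k]
        exact head_geo_bound k
      have e0 : ((f2 k (Sum.inr (0,1)) - f2 k (Sum.inr ((0:Fin 2),1))).natAbs) = 0 := by
        simp
      have e1 : ((f2 k (Sum.inr (0,1)) - f2 k (Sum.inr ((1:Fin 2),1))).natAbs) = k + 3 := by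
        simp [f2, -Int.natCast_natAbs]
        (try split_ifs) <;> omega
      have hB : ∑ j : Fin 2,
          2 * (1/2:ℝ)^((f2 k (Sum.inr (0,1)) - f2 k (Sum.inr (j,1))).natAbs) ≤ 2 + 1/8 := by
        rw [Fin.sum_univ_two, e0, e1]
        have b1 : (1/2:ℝ)^(k+3) ≤ (1/2:ℝ)^4 := half_pow_le (by omega)
        norm_num at b1 ⊢
        linarith
      refine lt_of_le_of_lt key ?_
      linarith [hA2, hB]
    · -- m = 1, use f3
      have key := expW_leaves_le k hk (f3 k) (lip3 k hk) _ hu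
      have hAe : ∀ i' : Fin k,
          ((f3 k (Sum.inr (1,1)) - f3 k (Sum.inl (i',2))).natAbs) = (k - 1 - (i':ℕ)) + 4 := by
        intro i'
        have := i'.2
        simp [f3, -Int.natCast_natAbs]
        (try split_ifs) <;> omega
      have hA2 : ∑ i' : Fin k,
          2 * (1/2:ℝ)^((f3 k (Sum.inr (1,1)) - f3 k (Sum.inl (i',2))).natAbs) ≤ 1/4 := by
        rw [Finset.sum_congr rfl (fun i' _ => by rw [hAe i']),
          Fin.sum_univ_eq_sum_range (fun j => 2 * (1/2:ℝ)^((k - 1 - j)+4)) k]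
        have hrefl : ∑ j ∈ Finset.range k, 2 * (1/2:ℝ)^((k - 1 - j) + 4)
            = ∑ j ∈ Finset.range k, 2 * (1/2:ℝ)^(j + 4) := by
          conv_rhs => rw [← Finset.sum_range_reflect (fun j => 2 * (1/2:ℝ)^(j+4)) k]
        rw [hrefl]
        exact head_geo_bound k
      have e1 : ((f3 k (Sum.inr (1,1)) - f3 k (Sum.inr ((1:Fin 2),1))).natAbs) = 0 := by
        simp
      have e0 : ((f3 k (Sum.inr (1,1)) - f3 k (Sum.inr ((0:Fin 2),1))).natAbs) = k + 3 := by
        simp [f3, -Int.natCast_natAbs]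
        (try split_ifs) <;> omega
      have hB : ∑ j : Fin 2,
          2 * (1/2:ℝ)^((f3 k (Sum.inr (1,1)) - f3 k (Sum.inr (j,1))).natAbs) ≤ 2 + 1/8 := by
        rw [Fin.sum_univ_two, e0, e1]
        have b1 : (1/2:ℝ)^(k+3) ≤ (1/2:ℝ)^4 := half_pow_le (by omega)
        norm_num at b1 ⊢
        linarith
      refine lt_of_le_of_lt key ?_
      linarith [hA2, hB]

section Kill
variable {V : Type*} {G : SimpleGraph V} {S : Finset V}

lemma expIndep_lt_one {u : V} (hS : ExpIndep G S) (hu : u ∈ S) :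
    expW G (S.erase u) u < 1 := by
  have := hS u hu
  rwa [erase_classical_eq] at this

lemma expIndep_no_two (hS : ExpIndep G S) {u v w : V} (hu : u ∈ S) (hv : v ∈ S) (hw : w ∈ S)
    (hvw : v ≠ w) (hvu : v ≠ u) (hwu : w ≠ u)
    (h2v : distDel G (↑(S.erase u)) u v ≤ 2) (h2w : distDel G (↑(S.erase u)) u w ≤ 2) :
    False := by
  have hsub : ({v, w} : Finset V) ⊆ S.erase u := by
    intro x hx
    rcases Finset.mem_insert.mp hx with rfl | hx
    · exact Finset.mem_erase.mpr ⟨hvu, hv⟩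
    · rcases Finset.mem_singleton.mp hx with rfl
      exact Finset.mem_erase.mpr ⟨hwu, hw⟩
  have hsum := expW_ge_sum (G := G) (S := S.erase u) (T := {v, w}) (u := u) (fun _ => 2)
    hsub ?hdist
  case hdist =>
    intro x hx
    rcases Finset.mem_insert.mp hx with rfl | hx
    · exact_mod_cast h2v
    · rcases Finset.mem_singleton.mp hx with rfl
      exact_mod_cast h2w
  rw [Finset.sum_pair hvw] at hsum
  have := expIndep_lt_one hS hu
  norm_num at hsum
  linarith

lemma expIndep_no_123 (hS : ExpIndep G S) {u v w x : V}
    (hu : u ∈ S) (hv : v ∈ S) (hw : w ∈ S) (hx : x ∈ S)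
    (hvw : v ≠ w) (hvx : v ≠ x) (hwx : w ≠ x)
    (hvu : v ≠ u) (hwu : w ≠ u) (hxu : x ≠ u)
    (h2v : distDel G (↑(S.erase u)) u v ≤ 2)
    (h3w : distDel G (↑(S.erase u)) u w ≤ 3)
    (h3x : distDel G (↑(S.erase u)) u x ≤ 3) :
    False := by
  classical
  have hsub : ({v, w, x} : Finset V) ⊆ S.erase u := by
    intro y hy
    simp only [Finset.mem_insert, Finset.mem_singleton] at hy
    rcases hy with rfl | rfl | rfl
    · exact Finset.mem_erase.mpr ⟨hvu, hv⟩
    · exact Finset.mem_erase.mpr ⟨hwu, hw⟩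
    · exact Finset.mem_erase.mpr ⟨hxu, hx⟩
  have hsum := expW_ge_sum (G := G) (S := S.erase u) (T := {v, w, x}) (u := u)
    (fun y => if y = v then 2 else 3) hsub ?hdist
  case hdist =>
    intro y hy
    simp only [Finset.mem_insert, Finset.mem_singleton] at hy
    rcases hy with rfl | rfl | rfl
    · simpa using h2v
    · simpa [Ne.symm hvw] using h3w
    · simpa [Ne.symm hvx] using h3x
  rw [Finset.sum_insert (by simp [hvw, hvx]), Finset.sum_pair hwx] at hsum
  simp only [if_pos, Ne.symm hvw, Ne.symm hvx, ite_true, ite_false, if_neg] at hsum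
  have := expIndep_lt_one hS hu
  norm_num at hsum
  linarith

end Kill

section TkAdj
variable {k : ℕ} {hk : 0 < k}

lemma tk_adj_of_rel (x y : TkVert k)
    (h : (∃ i j : Fin k, (i : ℕ) + 1 = (j : ℕ) ∧ x = Sum.inl (i, 0) ∧ y = Sum.inl (j, 0)) ∨
    (∃ i : Fin k, x = Sum.inl (i, 0) ∧ y = Sum.inl (i, 1)) ∨
    (∃ i : Fin k, x = Sum.inl (i, 1) ∧ y = Sum.inl (i, 2)) ∨
    (x = Sum.inl (⟨0, hk⟩, 0) ∧ y = Sum.inr (0, 0)) ∨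
    (x = Sum.inl (⟨k - 1, by omega⟩, 0) ∧ y = Sum.inr (1, 0)) ∨
    (∃ j : Fin 2, x = Sum.inr (j, 0) ∧ y = Sum.inr (j, 1)))
    (hne : x ≠ y) : (TkGraph k hk).Adj x y := by
  rw [TkGraph, SimpleGraph.fromRel_adj]
  exact ⟨hne, Or.inl h⟩

lemma adjAA (i j : Fin k) (hij : (i:ℕ) + 1 = (j:ℕ)) :
    (TkGraph k hk).Adj (Sum.inl (i, 0)) (Sum.inl (j, 0)) := by
  refine tk_adj_of_rel _ _ (Or.inl ⟨i, j, hij, rfl, rfl⟩) ?_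
  simp only [ne_eq, Sum.inl.injEq, Prod.mk.injEq]
  intro ⟨h1, _⟩
  rw [h1] at hij
  omega

lemma adjAB (i : Fin k) :
    (TkGraph k hk).Adj (Sum.inl (i, 0)) (Sum.inl (i, 1)) := by
  refine tk_adj_of_rel _ _ (Or.inr (Or.inl ⟨i, rfl, rfl⟩)) (by simp)

lemma adjBC (i : Fin k) :
    (TkGraph k hk).Adj (Sum.inl (i, 1)) (Sum.inl (i, 2)) := by
  refine tk_adj_of_rel _ _ (Or.inr (Or.inr (Or.inl ⟨i, rfl, rfl⟩))) (by simp)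

lemma adjAR0 : (TkGraph k hk).Adj (Sum.inl (⟨0, hk⟩, 0)) (Sum.inr (0, 0)) := by
  refine tk_adj_of_rel _ _ (Or.inr (Or.inr (Or.inr (Or.inl ⟨rfl, rfl⟩)))) (by simp)

lemma adjAR1 : (TkGraph k hk).Adj (Sum.inl (⟨k - 1, by omega⟩, 0)) (Sum.inr (1, 0)) := by
  refine tk_adj_of_rel _ _ (Or.inr (Or.inr (Or.inr (Or.inr (Or.inl ⟨rfl, rfl⟩))))) (by simp)

lemma adjRR (j : Fin 2) :
    (TkGraph k hk).Adj (Sum.inr (j, 0)) (Sum.inr (j, 1)) := by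
  refine tk_adj_of_rel _ _ (Or.inr (Or.inr (Or.inr (Or.inr (Or.inr ⟨j, rfl, rfl⟩))))) (by simp)

end TkAdj

section TkUpper
variable {k : ℕ} {hk : 0 < k} {S : Finset (TkVert k)}

local notation "G" => TkGraph k hk

def dblLeg (S : Finset (TkVert k)) (i : Fin k) : Prop :=
  (Sum.inl (i, 0) : TkVert k) ∈ S ∧ (Sum.inl (i, 2) : TkVert k) ∈ S

def empLeg (S : Finset (TkVert k)) (i : Fin k) : Prop :=
  (Sum.inl (i, 0) : TkVert k) ∉ S ∧ (Sum.inl (i, 1) : TkVert k) ∉ S ∧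
    (Sum.inl (i, 2) : TkVert k) ∉ S

lemma dbl_B_not (hS : ExpIndep G S) {i : Fin k} (hd : dblLeg S i) :
    (Sum.inl (i, 1) : TkVert k) ∉ S :=
  fun hB => not_adj_of_expIndep hS hd.1 hB (adjAB i)

lemma dbl_nbr_C (hS : ExpIndep G S) {i j : Fin k} (hd : dblLeg S i)
    (hadj : (TkGraph k hk).Adj (Sum.inl (i, 0)) (Sum.inl (j, 0)))
    (hnon : ¬ empLeg S j) :
    (Sum.inl (j, 2) : TkVert k) ∈ S ∧ (Sum.inl (j, 0) : TkVert k) ∉ S ∧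
      (Sum.inl (j, 1) : TkVert k) ∉ S := by
  have hij : i ≠ j := by
    intro h
    exact (TkGraph k hk).loopless.irrefl _ (h ▸ hadj)
  have hAj : (Sum.inl (j, 0) : TkVert k) ∉ S :=
    fun hAj => not_adj_of_expIndep hS hd.1 hAj hadj
  have hBj : (Sum.inl (j, 1) : TkVert k) ∉ S := by
    intro hBj
    exact expIndep_no_two hS hd.1 hd.2 hBj (by simp) (by simp) (by simp [hij.symm])
      (distDel_le_two _ (adjAB i) (adjBC i) (by simp [dbl_B_not hS hd]))
      (distDel_le_two _ hadj (adjAB j) (by simp [hAj]))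
  rcases not_and_or.mp hnon with h | h
  · exact absurd (not_not.mp h) hAj
  rcases not_and_or.mp (h : ¬ (_ ∧ _)) with h2 | h2
  · exact absurd (not_not.mp h2) hBj
  · exact ⟨not_not.mp h2, hAj, hBj⟩

lemma dbl_interior_kill (hS : ExpIndep G S) {i j₁ j₂ : Fin k} (hd : dblLeg S i)
    (hadj1 : (TkGraph k hk).Adj (Sum.inl (i, 0)) (Sum.inl (j₁, 0)))
    (hadj2 : (TkGraph k hk).Adj (Sum.inl (i, 0)) (Sum.inl (j₂, 0)))
    (hj : j₁ ≠ j₂)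
    (hnon1 : ¬ empLeg S j₁) (hnon2 : ¬ empLeg S j₂) : False := by
  obtain ⟨hC1, hA1, hB1⟩ := dbl_nbr_C hS hd hadj1 hnon1
  obtain ⟨hC2, hA2, hB2⟩ := dbl_nbr_C hS hd hadj2 hnon2
  have hij1 : i ≠ j₁ := fun h => (TkGraph k hk).loopless.irrefl _ (h ▸ hadj1)
  have hij2 : i ≠ j₂ := fun h => (TkGraph k hk).loopless.irrefl _ (h ▸ hadj2)
  exact expIndep_no_123 hS hd.1 hd.2 hC1 hC2
    (by simp [hij1]) (by simp [hij2]) (by simp [hj])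
    (by simp) (by simp [hij1.symm]) (by simp [hij2.symm])
    (distDel_le_two _ (adjAB i) (adjBC i) (by simp [dbl_B_not hS hd]))
    (distDel_le_three _ _ hadj1 (adjAB j₁) (adjBC j₁) (by simp [hA1]) (by simp [hB1]))
    (distDel_le_three _ _ hadj2 (adjAB j₂) (adjBC j₂) (by simp [hA2]) (by simp [hB2]))

lemma dbl_pendant_kill (hS : ExpIndep G S) {i : Fin k} {m : Fin 2} (hd : dblLeg S i)
    (hadj : (TkGraph k hk).Adj (Sum.inl (i, 0)) (Sum.inr (m, 0))) :
    (Sum.inr (m, 0) : TkVert k) ∉ S ∧ (Sum.inr (m, 1) : TkVert k) ∉ S := by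
  have h0 : (Sum.inr (m, 0) : TkVert k) ∉ S :=
    fun h => not_adj_of_expIndep hS hd.1 h hadj
  refine ⟨h0, fun h1 => ?_⟩
  exact expIndep_no_two hS hd.1 hd.2 h1 (by simp) (by simp) (by simp)
    (distDel_le_two _ (adjAB i) (adjBC i) (by simp [dbl_B_not hS hd]))
    (distDel_le_two _ hadj (adjRR m) (by simp [h0]))

lemma dbl_ded_kill (hS : ExpIndep G S) {i m j : Fin k} (hd1 : dblLeg S i)
    (hd2 : dblLeg S j) (hij : i ≠ j)
    (hadj1 : (TkGraph k hk).Adj (Sum.inl (i, 0)) (Sum.inl (m, 0)))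
    (hadj2 : (TkGraph k hk).Adj (Sum.inl (m, 0)) (Sum.inl (j, 0)))
    (hemp : empLeg S m) : False := by
  exact expIndep_no_two hS hd1.1 hd1.2 hd2.1 (by simp) (by simp) (by simp [hij.symm])
    (distDel_le_two _ (adjAB i) (adjBC i) (by simp [dbl_B_not hS hd1]))
    (distDel_le_two _ hadj1 hadj2 (by simp [hemp.1]))

end TkUpper

section TkCount
variable {k : ℕ} {hk : 0 < k} {S : Finset (TkVert k)}

def projTk : TkVert k → Fin k ⊕ Fin 2 := Sum.map Prod.fst Prod.fst

lemma fiber_inl_mem (i : Fin k) (x : TkVert k) :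
    x ∈ S.filter (fun y => projTk y = Sum.inl i) ↔
      x ∈ S ∧ (x = Sum.inl (i,0) ∨ x = Sum.inl (i,1) ∨ x = Sum.inl (i,2)) := by
  rw [Finset.mem_filter]
  refine and_congr_right fun _ => ?_
  cases x with
  | inl p =>
    obtain ⟨a, t⟩ := p
    fin_cases t <;> simp [projTk]
  | inr p =>
    simp [projTk]

lemma fiber_inr_mem (j : Fin 2) (x : TkVert k) :
    x ∈ S.filter (fun y => projTk y = Sum.inr j) ↔
      x ∈ S ∧ (x = Sum.inr (j,0) ∨ x = Sum.inr (j,1)) := by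
  rw [Finset.mem_filter]
  refine and_congr_right fun _ => ?_
  cases x with
  | inl p => simp [projTk]
  | inr p =>
    obtain ⟨a, t⟩ := p
    fin_cases t <;> simp [projTk]

lemma leg_bound (hS : ExpIndep (TkGraph k hk) S) (i : Fin k) :
    (S.filter (fun y => projTk y = Sum.inl i)).card + (if empLeg S i then 1 else 0)
      ≤ 1 + (if dblLeg S i then 1 else 0) := by
  by_cases hemp : empLeg S i
  · have hzero : S.filter (fun y => projTk y = Sum.inl i) = ∅ := by
      rw [Finset.eq_empty_iff_forall_notMem]
      intro x hx
      rw [fiber_inl_mem] at hx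
      obtain ⟨hxS, h | h | h⟩ := hx <;> subst h
      · exact hemp.1 hxS
      · exact hemp.2.1 hxS
      · exact hemp.2.2 hxS
    rw [hzero, if_pos hemp]
    simp
  · rw [if_neg hemp]
    by_cases hd : dblLeg S i
    · rw [if_pos hd]
      have hsub : S.filter (fun y => projTk y = Sum.inl i)
          ⊆ {Sum.inl (i,0), Sum.inl (i,2)} := by
        intro x hx
        rw [fiber_inl_mem] at hx
        obtain ⟨hxS, h | h | h⟩ := hx
        · simp [h]
        · exact absurd (h ▸ hxS) (dbl_B_not hS hd)
        · simp [h]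
      calc (S.filter (fun y => projTk y = Sum.inl i)).card + 0
          ≤ ({Sum.inl (i,0), Sum.inl (i,2)} : Finset (TkVert k)).card + 0 := by
            exact Nat.add_le_add_right (Finset.card_le_card hsub) 0
        _ ≤ 2 := by
            simpa using Finset.card_insert_le _ _
    · rw [if_neg hd]
      have hone : (S.filter (fun y => projTk y = Sum.inl i)).card ≤ 1 := by
        rw [Finset.card_le_one]
        intro a ha b hb
        rw [fiber_inl_mem] at ha hb
        obtain ⟨haS, ha'⟩ := ha
        obtain ⟨hbS, hb'⟩ := hb
        rcases ha' with rfl | rfl | rfl <;> rcases hb' with rfl | rfl | rfl <;> try rfl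
        · exact absurd (not_adj_of_expIndep hS haS hbS (adjAB i)) not_false
        · exact absurd ⟨haS, hbS⟩ hd
        · exact absurd (not_adj_of_expIndep hS hbS haS (adjAB i)) not_false
        · exact absurd (not_adj_of_expIndep hS haS hbS (adjBC i)) not_false
        · exact absurd ⟨hbS, haS⟩ hd
        · exact absurd (not_adj_of_expIndep hS hbS haS (adjBC i)) not_false
      omega

lemma pend_bound (hS : ExpIndep (TkGraph k hk) S) (j : Fin 2) :
    (S.filter (fun y => projTk y = Sum.inr j)).card
      ≤ (if (S.filter (fun y => projTk y = Sum.inr j)).Nonempty then 1 else 0) := by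
  by_cases hne : (S.filter (fun y => projTk y = Sum.inr j)).Nonempty
  · rw [if_pos hne, Finset.card_le_one]
    intro a ha b hb
    rw [fiber_inr_mem] at ha hb
    obtain ⟨haS, ha'⟩ := ha
    obtain ⟨hbS, hb'⟩ := hb
    rcases ha' with rfl | rfl <;> rcases hb' with rfl | rfl <;> try rfl
    · exact absurd (not_adj_of_expIndep hS haS hbS (adjRR j)) not_false
    · exact absurd (not_adj_of_expIndep hS hbS haS (adjRR j)) not_false
  · rw [if_neg hne, Finset.not_nonempty_iff_eq_empty.mp hne]
    simp

end TkCount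

section TkInj
variable {k : ℕ} {hk : 0 < k} {S : Finset (TkVert k)}

noncomputable def phiTk (S : Finset (TkVert k)) : Fin k ⊕ Fin 2 → Fin k ⊕ Fin 2 :=
  fun x => match x with
  | .inr j => .inr j
  | .inl i =>
    if h1 : ∃ h : (i:ℕ)+1 < k, empLeg S ⟨(i:ℕ)+1, h⟩ then .inl ⟨(i:ℕ)+1, h1.choose⟩
    else if 0 < (i:ℕ) ∧ empLeg S ⟨(i:ℕ)-1, Nat.lt_of_le_of_lt (Nat.sub_le _ _) i.2⟩ then
      .inl ⟨(i:ℕ)-1, Nat.lt_of_le_of_lt (Nat.sub_le _ _) i.2⟩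
    else if (i:ℕ) = 0 then .inr 0 else .inr 1

lemma dbl_last (hS : ExpIndep (TkGraph k hk) S) {i : Fin k} (hd : dblLeg S i)
    (h0 : (i:ℕ) ≠ 0)
    (h1 : ¬ ∃ h : (i:ℕ)+1 < k, empLeg S ⟨(i:ℕ)+1, h⟩)
    (h2 : ¬ (0 < (i:ℕ) ∧ empLeg S ⟨(i:ℕ)-1, Nat.lt_of_le_of_lt (Nat.sub_le _ _) i.2⟩)) :
    (i:ℕ) = k - 1 := by
  by_contra hne
  have hi1 : (i:ℕ)+1 < k := by have := i.2; omega
  have hnon2 : ¬ empLeg S ⟨(i:ℕ)+1, hi1⟩ := fun he => h1 ⟨hi1, he⟩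
  have hnon1 : ¬ empLeg S ⟨(i:ℕ)-1, Nat.lt_of_le_of_lt (Nat.sub_le _ _) i.2⟩ :=
    fun he => h2 ⟨Nat.pos_of_ne_zero h0, he⟩
  have hadj1 : (TkGraph k hk).Adj (Sum.inl (i, 0))
      (Sum.inl ((⟨(i:ℕ)-1, Nat.lt_of_le_of_lt (Nat.sub_le _ _) i.2⟩ : Fin k), 0)) :=
    (adjAA _ i (by simp; omega)).symm
  have hadj2 : (TkGraph k hk).Adj (Sum.inl (i, 0))
      (Sum.inl ((⟨(i:ℕ)+1, hi1⟩ : Fin k), 0)) :=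
    adjAA i _ rfl
  exact dbl_interior_kill hS hd hadj1 hadj2
    (by simp only [ne_eq, Fin.mk.injEq]; omega) hnon1 hnon2

lemma dbl_first_pend (hS : ExpIndep (TkGraph k hk) S) {i : Fin k} (hd : dblLeg S i)
    (h0 : (i:ℕ) = 0) :
    (Sum.inr (0, 0) : TkVert k) ∉ S ∧ (Sum.inr (0, 1) : TkVert k) ∉ S := by
  have : i = ⟨0, hk⟩ := Fin.ext h0
  subst this
  exact dbl_pendant_kill hS hd adjAR0

lemma dbl_last_pend (hS : ExpIndep (TkGraph k hk) S) {i : Fin k} (hd : dblLeg S i)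
    (h0 : (i:ℕ) = k - 1) :
    (Sum.inr (1, 0) : TkVert k) ∉ S ∧ (Sum.inr (1, 1) : TkVert k) ∉ S := by
  have hieq : i = ⟨k - 1, by omega⟩ := Fin.ext h0
  rw [hieq] at hd
  exact dbl_pendant_kill hS hd adjAR1

lemma phi_spec (hS : ExpIndep (TkGraph k hk) S) (i : Fin k) (hd : dblLeg S i) :
    (∃ m : Fin k, phiTk S (.inl i) = .inl m ∧ empLeg S m ∧
        ((i:ℕ)+1 = (m:ℕ) ∨ (m:ℕ)+1 = (i:ℕ))) ∨
      (phiTk S (.inl i) = .inr 0 ∧ (i:ℕ) = 0) ∨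
      (phiTk S (.inl i) = .inr 1 ∧ (i:ℕ) = k - 1) := by
  rw [phiTk]
  split_ifs with h1 h2 h3
  · exact Or.inl ⟨_, rfl, h1.choose_spec, Or.inl rfl⟩
  · exact Or.inl ⟨_, rfl, h2.2, Or.inr (by simp; omega)⟩
  · exact Or.inr (Or.inl ⟨rfl, h3⟩)
  · exact Or.inr (Or.inr ⟨rfl, dbl_last hS hd h3 h1 h2⟩)

lemma phi_inj_core (hS : ExpIndep (TkGraph k hk) S) {i i' : Fin k}
    (hd : dblLeg S i) (hd' : dblLeg S i')
    (heq : phiTk S (.inl i) = phiTk S (.inl i')) : i = i' := by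
  by_contra hne
  have hvne : (i:ℕ) ≠ (i':ℕ) := fun h => hne (Fin.ext h)
  rcases phi_spec hS i hd with ⟨m, he, hemp, hm⟩ | ⟨he, h0⟩ | ⟨he, h0⟩ <;>
    rcases phi_spec hS i' hd' with ⟨m', he', hemp', hm'⟩ | ⟨he', h0'⟩ | ⟨he', h0'⟩ <;>
    rw [he, he'] at heq <;> try (simp at heq)
  · -- both map to middles m = m'
    have hmm : m = m' := by simpa using heq
    subst hmm
    rcases hm with hm | hm <;> rcases hm' with hm' | hm'
    · omega
    · -- i+1 = m, m+1 = i' : DED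
      exact dbl_ded_kill hS hd hd' hne (adjAA i m hm) (adjAA m i' hm') hemp
    · exact dbl_ded_kill hS hd' hd (Ne.symm hne) (adjAA i' m hm') (adjAA m i hm) hemp
    · omega
  · omega
  · omega

lemma phi_ne_pend (hS : ExpIndep (TkGraph k hk) S) {i : Fin k} {j : Fin 2}
    (hd : dblLeg S i)
    (hne : (S.filter (fun y => projTk y = Sum.inr j)).Nonempty) :
    phiTk S (.inl i) ≠ .inr j := by
  intro heq
  obtain ⟨x, hx⟩ := hne
  rw [fiber_inr_mem] at hx
  rcases phi_spec hS i hd with ⟨m, he, _, _⟩ | ⟨he, h0⟩ | ⟨he, h0⟩ <;> rw [he] at heq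
  · exact absurd heq (by simp)
  · have hj : j = 0 := by simpa using heq.symm
    subst hj
    obtain ⟨hp0, hp1⟩ := dbl_first_pend hS hd h0
    rcases hx.2 with rfl | rfl
    · exact hp0 hx.1
    · exact hp1 hx.1
  · have hj : j = 1 := by simpa using heq.symm
    subst hj
    obtain ⟨hp0, hp1⟩ := dbl_last_pend hS hd h0
    rcases hx.2 with rfl | rfl
    · exact hp0 hx.1
    · exact hp1 hx.1

lemma inj_bound (hS : ExpIndep (TkGraph k hk) S) :
    (Finset.univ.filter (dblLeg S)).card
      + (Finset.univ.filter
          (fun j : Fin 2 => (S.filter (fun y => projTk y = Sum.inr j)).Nonempty)).card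
      ≤ (Finset.univ.filter (empLeg S)).card + 2 := by
  classical
  set D := Finset.univ.filter (dblLeg S) with hD
  set Pne := Finset.univ.filter
    (fun j : Fin 2 => (S.filter (fun y => projTk y = Sum.inr j)).Nonempty) with hPne
  set E := Finset.univ.filter (empLeg S) with hE
  set Dom := D.image Sum.inl ∪ Pne.image Sum.inr with hDom
  set Tgt := E.image Sum.inl ∪ (Finset.univ : Finset (Fin 2)).image Sum.inr with hTgt
  have hcardDom : Dom.card = D.card + Pne.card := by
    rw [hDom, Finset.card_union_of_disjoint (by simp [Finset.disjoint_left]),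
      Finset.card_image_of_injective _ Sum.inl_injective,
      Finset.card_image_of_injective _ Sum.inr_injective]
  have hcardTgt : Tgt.card = E.card + 2 := by
    rw [hTgt, Finset.card_union_of_disjoint (by simp [Finset.disjoint_left]),
      Finset.card_image_of_injective _ Sum.inl_injective,
      Finset.card_image_of_injective _ Sum.inr_injective]
    simp
  have hmaps : ∀ x ∈ Dom, phiTk S x ∈ Tgt := by
    intro x hx
    rw [hDom, Finset.mem_union] at hx
    rcases hx with hx | hx
    · obtain ⟨i, hi, rfl⟩ := Finset.mem_image.mp hx
      have hd : dblLeg S i := (Finset.mem_filter.mp hi).2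
      rcases phi_spec hS i hd with ⟨m, he, hemp, _⟩ | ⟨he, _⟩ | ⟨he, _⟩ <;> rw [he]
      · exact Finset.mem_union_left _ (Finset.mem_image.mpr
          ⟨m, Finset.mem_filter.mpr ⟨Finset.mem_univ _, hemp⟩, rfl⟩)
      · exact Finset.mem_union_right _ (by simp)
      · exact Finset.mem_union_right _ (by simp)
    · obtain ⟨j, _, rfl⟩ := Finset.mem_image.mp hx
      rw [phiTk]
      exact Finset.mem_union_right _ (by simp)
  have hinj : Set.InjOn (phiTk S) ↑Dom := by
    intro x hx y hy heq
    rw [hDom, Finset.coe_union, Set.mem_union] at hx hy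
    rcases hx with hx | hx <;> rcases hy with hy | hy
    · obtain ⟨i, hi, rfl⟩ := Finset.mem_image.mp (by exact_mod_cast hx)
      obtain ⟨i', hi', rfl⟩ := Finset.mem_image.mp (by exact_mod_cast hy)
      have := phi_inj_core hS (Finset.mem_filter.mp hi).2 (Finset.mem_filter.mp hi').2 heq
      rw [this]
    · obtain ⟨i, hi, rfl⟩ := Finset.mem_image.mp (by exact_mod_cast hx)
      obtain ⟨j, hj, rfl⟩ := Finset.mem_image.mp (by exact_mod_cast hy)
      have hj' := (Finset.mem_filter.mp hj).2
      rw [show phiTk S (.inr j) = .inr j from rfl] at heq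
      exact absurd heq (phi_ne_pend hS (Finset.mem_filter.mp hi).2 hj')
    · obtain ⟨j, hj, rfl⟩ := Finset.mem_image.mp (by exact_mod_cast hx)
      obtain ⟨i, hi, rfl⟩ := Finset.mem_image.mp (by exact_mod_cast hy)
      have hj' := (Finset.mem_filter.mp hj).2
      rw [show phiTk S (.inr j) = .inr j from rfl] at heq
      exact absurd heq.symm (phi_ne_pend hS (Finset.mem_filter.mp hi).2 hj')
    · obtain ⟨j, hj, rfl⟩ := Finset.mem_image.mp (by exact_mod_cast hx)
      obtain ⟨j', hj', rfl⟩ := Finset.mem_image.mp (by exact_mod_cast hy)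
      rw [show phiTk S (.inr j) = .inr j from rfl,
        show phiTk S (.inr j') = .inr j' from rfl] at heq
      rw [show j = j' by simpa using heq]
  have := Finset.card_le_card_of_injOn (phiTk S) hmaps hinj
  omega

end TkInj

lemma tk_card_le (k : ℕ) (hk : 0 < k) (S : Finset (TkVert k))
    (hS : ExpIndep (TkGraph k hk) S) : S.card ≤ k + 2 := by
  classical
  have h1 : S.card = ∑ y : Fin k ⊕ Fin 2, (S.filter (fun x => projTk x = y)).card :=
    Finset.card_eq_sum_card_fiberwise (fun x _ => Finset.mem_univ _)
  rw [Fintype.sum_sum_type] at h1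
  have hlegs : ∑ i : Fin k, (S.filter (fun x => projTk x = Sum.inl i)).card
      + ∑ i : Fin k, (if empLeg S i then 1 else 0)
      ≤ k + ∑ i : Fin k, (if dblLeg S i then 1 else 0) := by
    have := Finset.sum_le_sum (fun i (_ : i ∈ Finset.univ) => leg_bound (hk := hk) hS i)
    rw [Finset.sum_add_distrib, Finset.sum_add_distrib, Finset.sum_const] at this
    simpa using this
  have hpends : ∑ j : Fin 2, (S.filter (fun x => projTk x = Sum.inr j)).card
      ≤ ∑ j : Fin 2, (if (S.filter (fun x => projTk x = Sum.inr j)).Nonempty then 1 else 0) :=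
    Finset.sum_le_sum (fun j _ => pend_bound (hk := hk) hS j)
  have hbE : ∑ i : Fin k, (if empLeg S i then 1 else 0)
      = (Finset.univ.filter (empLeg S)).card := by
    rw [Finset.card_filter]
  have hbD : ∑ i : Fin k, (if dblLeg S i then 1 else 0)
      = (Finset.univ.filter (dblLeg S)).card := by
    rw [Finset.card_filter]
  have hbP : ∑ j : Fin 2, (if (S.filter (fun x => projTk x = Sum.inr j)).Nonempty then 1 else 0)
      = (Finset.univ.filter
          (fun j : Fin 2 => (S.filter (fun y => projTk y = Sum.inr j)).Nonempty)).card := by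
    rw [Finset.card_filter]
  have hinj := inj_bound (hk := hk) hS
  omega

/-- For every positive integer `k`, the exponential independence number of the tree
`T_k` of order `n(T_k) = 3k + 4` equals `(n(T_k) + 2)/3 = k + 2`. -/
theorem stmt11 (k : ℕ) (hk : 0 < k) :
    Fintype.card (TkVert k) = 3 * k + 4 ∧
    expIndepNum (TkVert k) (TkGraph k hk) = k + 2 := by
  constructor
  · simp [TkVert]
    ring
  · rw [expIndepNum]
    have hmem : k + 2 ∈ {m : ℕ | ∃ S : Finset (TkVert k), ExpIndep (TkGraph k hk) S ∧ S.card = m} :=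
      ⟨TkLeaves k, tkLeaves_expIndep k hk, tkLeaves_card k⟩
    have hub : ∀ m ∈ {m : ℕ | ∃ S : Finset (TkVert k),
        ExpIndep (TkGraph k hk) S ∧ S.card = m}, m ≤ k + 2 := by
      rintro m ⟨S, hS, rfl⟩
      exact tk_card_le k hk S hS
    exact le_antisymm (csSup_le ⟨k + 2, hmem⟩ hub) (le_csSup ⟨k + 2, hub⟩ hmem)
end

section
/- If T is a finite tree of order n ≥ 4 in which every vertex has degree 1 or 3, and L is the set of leaves of T (so |L| = (n + 2)/2), then for any leaf x of T the set L ∖ {x} is an exponentially independent set in T of cardinality n/2; in particular, α_e(T) ≥ n/2. -/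
open SimpleGraph
open scoped Classical

private lemma uniqNbr {V : Type*} [Fintype V] {G : SimpleGraph V} {u a b : V}
    (h1 : G.degree u = 1) (ha : G.Adj u a) (hb : G.Adj u b) : a = b := by
  have h1' : (G.neighborFinset u).card = 1 := h1
  obtain ⟨c, hcc⟩ := Finset.card_eq_one.mp h1'
  have ha' : a ∈ G.neighborFinset u := by simpa using ha
  have hb' : b ∈ G.neighborFinset u := by simpa using hb
  rw [hcc, Finset.mem_singleton] at ha' hb'
  rw [ha', hb']

private lemma exists_parent {V : Type*} {G : SimpleGraph V} (hc : G.Connected) {u v : V} {d : ℕ}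
    (h : G.dist u v = d + 1) : ∃ p, G.Adj p v ∧ G.dist u p = d := by
  obtain ⟨w, hw⟩ := hc.exists_walk_length_eq_dist u v
  rw [h] at hw
  have hne : v ≠ u := by
    rintro rfl
    rw [SimpleGraph.dist_self] at h; omega
  obtain ⟨p, hadj, q', heq⟩ := SimpleGraph.Walk.exists_eq_cons_of_ne hne w.reverse
  have hql : q'.length = d := by
    have := congrArg SimpleGraph.Walk.length heq
    rw [SimpleGraph.Walk.length_reverse, hw] at this
    simp [SimpleGraph.Walk.length_cons] at this
    omega
  refine ⟨p, hadj.symm, ?_⟩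
  have hle : G.dist u p ≤ d := by
    have := SimpleGraph.dist_le q'.reverse
    rwa [SimpleGraph.Walk.length_reverse, hql] at this
  have hge : d ≤ G.dist u p := by
    have ht := hc.dist_triangle (u := u) (v := p) (w := v)
    have h1 : G.dist p v = 1 := SimpleGraph.dist_eq_one_iff_adj.mpr hadj.symm
    omega
  omega

private lemma exists_dist_two {V : Type*} {G : SimpleGraph V} (hc : G.Connected) {u z : V}
    (hz : 2 ≤ G.dist u z) : ∃ w, G.dist u w = 2 := by
  suffices H : ∀ m z, G.dist u z = m → 2 ≤ m → ∃ w, G.dist u w = 2 by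
    exact H _ z rfl hz
  intro m
  induction m using Nat.strong_induction_on with
  | _ m ih =>
    intro z hzm h2
    rcases Nat.lt_or_ge m 3 with hm | hm
    · -- m = 2
      interval_cases m
      exact ⟨z, hzm⟩
    · obtain ⟨e, rfl⟩ : ∃ e, m = e + 1 := ⟨m - 1, by omega⟩
      obtain ⟨p, _, hp⟩ := exists_parent hc (d := e) hzm
      exact ih e (by omega) p hp (by omega)

private lemma kraft {V : Type*} [Fintype V] {G : SimpleGraph V} (hc : G.Connected)
    (hdeg : ∀ v, G.degree v = 1 ∨ G.degree v = 3) {u r : V} (hur : G.Adj u r)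
    (hu : G.degree u = 1) (hr : G.degree r = 3) (L : Finset V)
    (hL : ∀ v, v ∈ L ↔ G.degree v = 1) :
    ∑ v ∈ L.erase u, ((1:ℝ)/2)^(G.dist u v) ≤ 1/2 := by
  classical
  have hdist1 : ∀ v, G.dist u v = 1 → v = r := fun v hv =>
    uniqNbr hu (SimpleGraph.dist_eq_one_iff_adj.mp hv) hur
  set A : ℕ → Finset V := fun d => (L.erase u).filter (fun v => G.dist u v ≤ d) with hA
  set B : ℕ → Finset V := fun d =>
    Finset.univ.filter (fun v => G.dist u v = d ∧ v ∉ L) with hB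
  set g : ℕ → ℝ := fun d =>
    (∑ v ∈ A d, ((1:ℝ)/2)^(G.dist u v)) + ((B d).card : ℝ) * ((1:ℝ)/2)^d with hg
  have claim : ∀ d, 1 ≤ d → g d ≤ 1/2 := by
    intro d hd
    induction d, hd using Nat.le_induction with
    | base =>
      have hA1 : A 1 = ∅ := by
        rw [Finset.eq_empty_iff_forall_notMem]
        intro v hv
        simp only [hA, Finset.mem_filter, Finset.mem_erase] at hv
        obtain ⟨⟨hvu, hvL⟩, hvd⟩ := hv
        have h0 : G.dist u v ≠ 0 := fun h => hvu (hc.dist_eq_zero_iff.mp h).symm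
        have h1 : G.dist u v = 1 := by omega
        have := hdist1 v h1
        subst this
        have := (hL v).mp hvL
        omega
      have hB1 : B 1 ⊆ {r} := by
        intro v hv
        simp only [hB, Finset.mem_filter] at hv
        simp [hdist1 v hv.2.1]
      have hcard : ((B 1).card : ℝ) ≤ 1 := by
        have := Finset.card_le_card hB1
        simp only [Finset.card_singleton] at this
        exact_mod_cast this
      simp only [hg, hA1, Finset.sum_empty, zero_add]
      nlinarith
    | succ d hd ih =>
      -- the sphere at distance d+1
      set S1 : Finset V := Finset.univ.filter (fun v => G.dist u v = d + 1) with hS1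
      have hpar : ∀ v ∈ S1, ∃ p, G.Adj p v ∧ G.dist u p = d := by
        intro v hv
        exact exists_parent hc (by simpa [hS1] using hv)
      choose! f hf1 hf2 using hpar
      obtain ⟨e, rfl⟩ : ∃ e, d = e + 1 := ⟨d - 1, by omega⟩
      have hmaps : ∀ v ∈ S1, f v ∈ B (e + 1) := by
        intro v hv
        have hfv : G.dist u (f v) = e + 1 := hf2 v hv
        simp only [hB, Finset.mem_filter, Finset.mem_univ, true_and]
        refine ⟨hfv, fun hfL => ?_⟩
        obtain ⟨q, hq1, hq2⟩ := exists_parent hc hfv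
        have hqv : q = v := uniqNbr ((hL _).mp hfL) hq1.symm (hf1 v hv)
        have hv' : G.dist u v = e + 1 + 1 := by simpa [hS1] using hv
        rw [hqv] at hq2
        omega
      have hfib : ∀ p ∈ B (e + 1), (S1.filter (fun v => f v = p)).card ≤ 2 := by
        intro p hp
        simp only [hB, Finset.mem_filter, Finset.mem_univ, true_and] at hp
        obtain ⟨hpd, hpL⟩ := hp
        have hp3 : G.degree p = 3 := (hdeg p).resolve_left (fun h => hpL ((hL p).mpr h))
        obtain ⟨q, hq1, hq2⟩ := exists_parent hc hpd
        have hsub : S1.filter (fun v => f v = p) ⊆ (G.neighborFinset p).erase q := by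
          intro v hv
          simp only [Finset.mem_filter] at hv
          obtain ⟨hvS, hvf⟩ := hv
          have hadj : G.Adj p v := hvf ▸ hf1 v hvS
          have hvd : G.dist u v = e + 1 + 1 := by simpa [hS1] using hvS
          refine Finset.mem_erase.mpr ⟨fun h => ?_, by simpa using hadj⟩
          subst h; omega
        have hcard : ((G.neighborFinset p).erase q).card = 2 := by
          rw [Finset.card_erase_of_mem (by simpa using hq1.symm)]
          have : (G.neighborFinset p).card = 3 := hp3
          omega
        calc (S1.filter (fun v => f v = p)).card ≤ _ := Finset.card_le_card hsub
          _ = 2 := hcard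
      have hcount : S1.card ≤ 2 * (B (e + 1)).card :=
        Finset.card_le_mul_card_image_of_maps_to hmaps 2 hfib
      -- split the sum over A (e+2)
      set LE : Finset V := (L.erase u).filter (fun v => G.dist u v = e + 1 + 1) with hLE
      have hAsplit : A (e + 1 + 1) = A (e + 1) ∪ LE := by
        ext v
        simp only [hA, hLE, Finset.mem_filter, Finset.mem_union, Finset.mem_erase]
        constructor
        · rintro ⟨hv, hd⟩
          rcases Nat.lt_or_ge (G.dist u v) (e + 1 + 1) with h | h
          · exact Or.inl ⟨hv, by omega⟩
          · exact Or.inr ⟨hv, by omega⟩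
        · rintro (⟨hv, hd⟩ | ⟨hv, hd⟩) <;> exact ⟨hv, by omega⟩
      have hAdisj : Disjoint (A (e + 1)) LE := by
        rw [Finset.disjoint_left]
        intro v hv hv'
        simp only [hA, hLE, Finset.mem_filter] at hv hv'
        omega
      have hsum1 : ∑ v ∈ A (e + 1 + 1), ((1:ℝ)/2)^(G.dist u v)
          = ∑ v ∈ A (e + 1), ((1:ℝ)/2)^(G.dist u v) + ∑ v ∈ LE, ((1:ℝ)/2)^(G.dist u v) := by
        rw [hAsplit, Finset.sum_union hAdisj]
      have hsum2 : ∑ v ∈ LE, ((1:ℝ)/2)^(G.dist u v) = (LE.card : ℝ) * ((1:ℝ)/2)^(e+1+1) := by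
        rw [Finset.sum_congr rfl (fun v hv => by
          simp only [hLE, Finset.mem_filter] at hv
          rw [hv.2])]
        simp [mul_comm]
      -- LE and B (e+2) are disjoint subsets of S1
      have hdisj2 : Disjoint LE (B (e + 1 + 1)) := by
        rw [Finset.disjoint_left]
        intro v hv hv'
        simp only [hLE, hB, Finset.mem_filter, Finset.mem_erase] at hv hv'
        exact hv'.2.2 hv.1.2
      have hsub2 : LE ∪ B (e + 1 + 1) ⊆ S1 := by
        intro v hv
        simp only [hLE, hB, hS1, Finset.mem_union, Finset.mem_filter, Finset.mem_erase,
          Finset.mem_univ, true_and] at hv ⊢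
        rcases hv with h | h
        · exact h.2
        · exact h.1
      have hcards : LE.card + (B (e + 1 + 1)).card ≤ S1.card := by
        rw [← Finset.card_union_of_disjoint hdisj2]
        exact Finset.card_le_card hsub2
      -- numeric conclusion
      have hpow : ((1:ℝ)/2)^(e+1+1) = ((1:ℝ)/2)^(e+1) * (1/2) := pow_succ _ _
      have hpownn : (0:ℝ) ≤ ((1:ℝ)/2)^(e+1+1) := by positivity
      have hc1 : ((LE.card : ℝ) + ((B (e+1+1)).card : ℝ)) * ((1:ℝ)/2)^(e+1+1)
          ≤ (2 * ((B (e+1)).card : ℝ)) * ((1:ℝ)/2)^(e+1+1) := by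
        apply mul_le_mul_of_nonneg_right _ hpownn
        have h1 : ((LE.card + (B (e+1+1)).card : ℕ) : ℝ) ≤ ((S1.card : ℕ) : ℝ) := by
          exact_mod_cast hcards
        have h2 : ((S1.card : ℕ) : ℝ) ≤ ((2 * (B (e+1)).card : ℕ) : ℝ) := by
          exact_mod_cast hcount
        push_cast at h1 h2
        linarith
      have hgoal : g (e + 1 + 1) ≤ g (e + 1) := by
        simp only [hg]
        rw [hsum1, hsum2]
        nlinarith [hc1, hpow]
      exact hgoal.trans ih
  -- conclude
  have hNle : ∀ v ∈ L.erase u, G.dist u v ≤ Fintype.card V := by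
    intro v hv
    obtain ⟨p, hp, hl⟩ := hc.exists_path_of_dist u v
    exact hl ▸ hp.length_lt.le
  have hAall : A (Fintype.card V) = L.erase u :=
    Finset.filter_true_of_mem hNle
  have hN1 : 1 ≤ Fintype.card V := Fintype.card_pos_iff.mpr ⟨u⟩
  have := claim (Fintype.card V) hN1
  simp only [hg, hAall] at this
  have hBnn : (0:ℝ) ≤ ((B (Fintype.card V)).card : ℝ) * ((1:ℝ)/2)^(Fintype.card V) := by
    positivity
  linarith

private lemma ncard_deg {V : Type*} [Fintype V] (G : SimpleGraph V) (v : V) :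
    (G.neighborSet v).ncard = G.degree v := by
  rw [← SimpleGraph.card_neighborSet_eq_degree, ← Nat.card_coe_set_eq,
    Nat.card_eq_fintype_card]

private lemma get_r {V : Type*} [Fintype V] {G : SimpleGraph V} (hc : G.Connected)
    (hn : 4 ≤ Fintype.card V) (hdeg : ∀ v, G.degree v = 1 ∨ G.degree v = 3)
    {u : V} (hu1 : G.degree u = 1) : ∃ r, G.Adj u r ∧ G.degree r = 3 := by
  classical
  have hu1' : (G.neighborFinset u).card = 1 := hu1
  obtain ⟨c, hcc⟩ := Finset.card_eq_one.mp hu1'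
  have hadj : G.Adj u c := by
    rw [← SimpleGraph.mem_neighborFinset, hcc]
    exact Finset.mem_singleton_self c
  refine ⟨c, hadj, ?_⟩
  rcases hdeg c with h1 | h3
  · exfalso
    have hcardle : ({u, c} : Finset V).card ≤ 2 := Finset.card_insert_le _ _ |>.trans (by simp)
    have hlt : ({u, c} : Finset V).card < Fintype.card V := by omega
    obtain ⟨z, hz⟩ : (Finset.univ \ ({u, c} : Finset V)).Nonempty := by
      rw [← Finset.card_pos, Finset.card_sdiff_of_subset (Finset.subset_univ _), Finset.card_univ]
      omega
    rw [Finset.mem_sdiff, Finset.mem_insert, Finset.mem_singleton] at hz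
    have hzu : z ≠ u := fun h => hz.2 (Or.inl h)
    have hzc : z ≠ c := fun h => hz.2 (Or.inr h)
    have hd0 : G.dist u z ≠ 0 := fun h => hzu (hc.dist_eq_zero_iff.mp h).symm
    have hd1 : G.dist u z ≠ 1 := fun h =>
      hzc (uniqNbr hu1 (SimpleGraph.dist_eq_one_iff_adj.mp h) hadj)
    obtain ⟨w, hw⟩ := exists_dist_two hc (u := u) (z := z) (by omega)
    obtain ⟨p, hp1, hp2⟩ := exists_parent hc (d := 1) hw
    have hpc : p = c := uniqNbr hu1 (SimpleGraph.dist_eq_one_iff_adj.mp hp2) hadj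
    subst hpc
    have huw : u = w := uniqNbr h1 hadj.symm hp1
    rw [← huw] at hw
    rw [SimpleGraph.dist_self] at hw
    omega
  · exact h3

/-- If `T` is a finite tree of order `n ≥ 4` in which every vertex has degree `1` or
`3`, and `L` is its set of leaves (so `|L| = (n + 2)/2`), then for any leaf `x` the set
`L ∖ {x}` is an exponentially independent set of cardinality `n/2`; in particular,
`α_e(T) ≥ n/2`. -/
theorem stmt13 {V : Type*} [Fintype V] (G : SimpleGraph V) (hT : G.IsTree)
    (hn : 4 ≤ Fintype.card V)
    (hdeg : ∀ v : V, (G.neighborSet v).ncard = 1 ∨ (G.neighborSet v).ncard = 3)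
    (L : Finset V) (hL : ∀ v : V, v ∈ L ↔ (G.neighborSet v).ncard = 1) :
    (L.card : ℝ) = ((Fintype.card V : ℝ) + 2) / 2 ∧
    (∀ x ∈ L, ExpIndep G (L.erase x) ∧
      ((L.erase x).card : ℝ) = (Fintype.card V : ℝ) / 2) ∧
    (Fintype.card V : ℝ) / 2 ≤ (expIndepNum V G : ℝ) := by
  classical
  have hc : G.Connected := hT.isConnected
  have hdeg' : ∀ v, G.degree v = 1 ∨ G.degree v = 3 := by
    intro v; have := hdeg v; rwa [ncard_deg] at this
  have hL' : ∀ v, v ∈ L ↔ G.degree v = 1 := by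
    intro v; rw [hL, ncard_deg]
  -- handshake: 2|L| = n + 2
  have hkey : 2 * L.card = Fintype.card V + 2 := by
    have h1 : ∑ v, G.degree v = 2 * G.edgeFinset.card := G.sum_degrees_eq_twice_card_edges
    have h2 : G.edgeFinset.card + 1 = Fintype.card V := hT.card_edgeFinset
    have h3 : ∑ v ∈ L, G.degree v = L.card := by
      rw [Finset.sum_congr rfl (fun v hv => (hL' v).mp hv), Finset.sum_const, smul_eq_mul,
        mul_one]
    have h4 : ∑ v ∈ Finset.univ \ L, G.degree v = (Finset.univ \ L).card * 3 := by
      have hall : ∀ v ∈ Finset.univ \ L, G.degree v = 3 := by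
        intro v hv
        rw [Finset.mem_sdiff] at hv
        exact (hdeg' v).resolve_left (fun h => hv.2 ((hL' v).mpr h))
      rw [Finset.sum_congr rfl hall, Finset.sum_const, smul_eq_mul]
    have h5 : ∑ v ∈ Finset.univ \ L, G.degree v + ∑ v ∈ L, G.degree v = ∑ v, G.degree v :=
      Finset.sum_sdiff (Finset.subset_univ L)
    have h6 : (Finset.univ \ L).card = Fintype.card V - L.card := by
      rw [Finset.card_sdiff_of_subset (Finset.subset_univ L), Finset.card_univ]
    have h7 : L.card ≤ Fintype.card V := by
      simpa [Finset.card_univ] using Finset.card_le_univ L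
    omega
  have hkeyR : 2 * (L.card : ℝ) = (Fintype.card V : ℝ) + 2 := by
    exact_mod_cast congrArg (Nat.cast : ℕ → ℝ) hkey
  have part1 : (L.card : ℝ) = ((Fintype.card V : ℝ) + 2) / 2 := by linarith
  -- exponential independence of L.erase x
  have part2 : ∀ x ∈ L, ExpIndep G (L.erase x) := by
    intro x hx
    unfold ExpIndep
    intro u hu
    rw [Finset.mem_erase] at hu
    obtain ⟨hux, huL⟩ := hu
    have hu1 : G.degree u = 1 := (hL' u).mp huL
    obtain ⟨r, hur, hr3⟩ := get_r hc hn hdeg' hu1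
    set S : Finset V := (L.erase x).erase u with hS
    have hterm : ∀ v ∈ S, (if distDel G (↑S) u v = ⊤ then (0:ℝ)
        else 2 * (1 / 2 : ℝ) ^ (distDel G (↑S) u v).toNat)
        ≤ 2 * ((1:ℝ)/2) ^ (G.dist u v) := by
      intro v hv
      split_ifs with h
      · positivity
      · have h' : (G.deleteSet (↑S \ {u, v})).edist u v ≠ ⊤ := h
        have hle : G.dist u v ≤ (G.deleteSet (↑S \ {u, v})).dist u v :=
          SimpleGraph.Reachable.dist_anti (fun a b hab => And.left hab)
            (SimpleGraph.reachable_of_edist_ne_top h')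
        have heq : (distDel G (↑S) u v).toNat = (G.deleteSet (↑S \ {u, v})).dist u v := rfl
        rw [heq]
        have hp := pow_le_pow_of_le_one (by norm_num : (0:ℝ) ≤ 1/2)
          (by norm_num : (1:ℝ)/2 ≤ 1) hle
        linarith
    have hbound : expW G S u ≤ 2 * ∑ v ∈ S, ((1:ℝ)/2) ^ (G.dist u v) := by
      unfold expW
      rw [Finset.mul_sum]
      exact Finset.sum_le_sum hterm
    have hxLu : x ∈ L.erase u := Finset.mem_erase.mpr ⟨fun h => hux h.symm, hx⟩
    have hSeq : S = (L.erase u).erase x := Finset.erase_right_comm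
    have hsum : ∑ v ∈ S, ((1:ℝ)/2) ^ (G.dist u v) + ((1:ℝ)/2) ^ (G.dist u x)
        = ∑ v ∈ L.erase u, ((1:ℝ)/2) ^ (G.dist u v) := by
      rw [hSeq]
      exact Finset.sum_erase_add _ _ hxLu
    have hk := kraft hc hdeg' hur hu1 hr3 L hL'
    have hxpos : (0:ℝ) < ((1:ℝ)/2) ^ (G.dist u x) := by positivity
    calc expW G S u ≤ 2 * ∑ v ∈ S, ((1:ℝ)/2) ^ (G.dist u v) := hbound
      _ < 1 := by linarith
  have card2 : ∀ x ∈ L, ((L.erase x).card : ℝ) = (Fintype.card V : ℝ) / 2 := by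
    intro x hx
    have h1 : 1 ≤ L.card := Finset.card_pos.mpr ⟨x, hx⟩
    rw [Finset.card_erase_of_mem hx, Nat.cast_sub h1]
    push_cast
    linarith
  refine ⟨part1, fun x hx => ⟨part2 x hx, card2 x hx⟩, ?_⟩
  have hLne : L.Nonempty := by
    rw [← Finset.card_pos]; omega
  obtain ⟨x, hx⟩ := hLne
  have hmem : (L.erase x).card ∈ {m : ℕ | ∃ S : Finset V, ExpIndep G S ∧ S.card = m} :=
    ⟨L.erase x, part2 x hx, rfl⟩
  have hbdd : BddAbove {m : ℕ | ∃ S : Finset V, ExpIndep G S ∧ S.card = m} := by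
    refine ⟨Fintype.card V, ?_⟩
    rintro m ⟨S, _, rfl⟩
    exact (Finset.card_le_univ S).trans_eq Finset.card_univ
  have hle : (L.erase x).card ≤ expIndepNum V G := le_csSup hbdd hmem
  rw [← card2 x hx]
  exact_mod_cast hle
end

section
/- Let p ∈ (0,1]. For each positive integer k, let T(k) be the perfect binary tree of depth k, and let S be a random set of vertices of T(k) that contains the root of T(k) and contains each other vertex of T(k) independently with probability p. Then the probability that S is exponentially independent in T(k) tends to 0 as k → ∞. -/
open SimpleGraph
open scoped Classical

/-- The perfect binary tree of depth `k`, with vertices indexed as in a binary heap: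
in `1`-based indexing, the children of vertex `i` are `2i` and `2i + 1`; the root is
vertex `1` (index `0`), and its order is `2^(k+1) - 1`. -/
def pbt (k : ℕ) : SimpleGraph (Fin (2 ^ (k + 1) - 1)) :=
  SimpleGraph.fromRel (fun x y =>
    (y : ℕ) + 1 = 2 * ((x : ℕ) + 1) ∨ (y : ℕ) + 1 = 2 * ((x : ℕ) + 1) + 1)

/-- The root of the perfect binary tree of depth `k`. -/
def pbtRoot (k : ℕ) : Fin (2 ^ (k + 1) - 1) :=
  ⟨0, by have : 1 < 2 ^ (k + 1) := Nat.one_lt_two_pow_iff.mpr (by omega); omega⟩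

/-- If a set contains two adjacent vertices, it is not exponentially independent. -/
lemma not_expIndep_of_adj {V : Type*} (G : SimpleGraph V) (S : Finset V)
    {u v : V} (hu : u ∈ S) (hv : v ∈ S) (huv : G.Adj u v) : ¬ ExpIndep G S := by
  intro h
  have hlt := h u hu
  have hne : v ≠ u := fun e => G.loopless.irrefl u (e ▸ huv)
  have hvS : v ∈ S.erase u := Finset.mem_erase.mpr ⟨hne, hv⟩
  have hadj : (G.deleteSet ((↑(S.erase u) : Set V) \ {u, v})).Adj u v :=
    show G.Adj u v ∧ u ∉ ((↑(S.erase u) : Set V) \ {u, v}) ∧ v ∉ ((↑(S.erase u) : Set V) \ {u, v}) from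
    ⟨huv, fun hmem => hmem.2 (Set.mem_insert _ _),
      fun hmem => hmem.2 (Set.mem_insert_of_mem _ rfl)⟩
  have hdist : distDel G (↑(S.erase u)) u v = 1 := by
    unfold distDel
    exact SimpleGraph.edist_eq_one_iff_adj.mpr hadj
  have hterm : (if distDel G (↑(S.erase u)) u v = ⊤ then (0:ℝ)
      else 2 * (1 / 2 : ℝ) ^ (distDel G (↑(S.erase u)) u v).toNat) = 1 := by
    rw [hdist]
    norm_num
  have hle : (1:ℝ) ≤ expW G (S.erase u) u := by
    rw [← hterm]
    unfold expW
    apply Finset.single_le_sum _ hvS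
    intro i _
    split_ifs
    · exact le_refl 0
    · positivity
  exact absurd hlt (not_lt.mpr hle)

/-- Total mass of the Bernoulli weights is `1`. -/
lemma sum_bw {V : Type*} [DecidableEq V] (p : ℝ) (U : Finset V) :
    ∑ A ∈ U.powerset, p ^ A.card * (1 - p) ^ (U.card - A.card) = 1 := by
  induction U using Finset.induction_on with
  | empty => simp
  | @insert a s ha ih =>
    rw [Finset.sum_powerset_insert ha, ← Finset.sum_add_distrib]
    refine Eq.trans (Finset.sum_congr rfl ?_) ih
    intro A hA
    rw [Finset.mem_powerset] at hA
    have haA : a ∉ A := fun h => ha (hA h)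
    have hc : A.card ≤ s.card := Finset.card_le_card hA
    rw [Finset.card_insert_of_notMem ha, Finset.card_insert_of_notMem haA]
    have h1 : s.card + 1 - A.card = (s.card - A.card) + 1 := by omega
    have h2 : s.card + 1 - (A.card + 1) = s.card - A.card := by omega
    rw [h1, h2, pow_succ, pow_succ]
    ring

/-- Key probabilistic bound: if we have `m` disjoint pairs inside `U`, the probability
that no pair is fully included in a Bernoulli random subset of `U` is at most
`(1 - p^2)^m`. -/
lemma key_bound {V : Type*} [DecidableEq V] (p : ℝ) (hp0 : 0 ≤ p) (hp1 : p ≤ 1)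
    (a b : ℕ → V) :
    ∀ (m : ℕ) (U : Finset V),
      (∀ i, i < m → a i ∈ U) → (∀ i, i < m → b i ∈ U) →
      (∀ i, i < m → ∀ j, j < m → a i ≠ b j) →
      (∀ i, i < m → ∀ j, j < m → i ≠ j → a i ≠ a j) →
      (∀ i, i < m → ∀ j, j < m → i ≠ j → b i ≠ b j) →
      ∑ A ∈ U.powerset, p ^ A.card * (1 - p) ^ (U.card - A.card) *
        (if ∀ i, i < m → ¬(a i ∈ A ∧ b i ∈ A) then (1 : ℝ) else 0)
        ≤ (1 - p ^ 2) ^ m := by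
  intro m
  induction m with
  | zero =>
    intro U _ _ _ _ _
    simp only [Nat.not_lt_zero, false_implies, implies_true, if_true, mul_one, pow_zero]
    exact le_of_eq (sum_bw p U)
  | succ m ih =>
    intro U haU hbU hab haa hbb
    have hABne : a m ≠ b m := hab m (by omega) m (by omega)
    have hAU : a m ∈ U := haU m (by omega)
    have hBU : b m ∈ U := hbU m (by omega)
    set U' := (U.erase (a m)).erase (b m) with hU'
    have hBe : b m ∈ U.erase (a m) := Finset.mem_erase.mpr ⟨Ne.symm hABne, hBU⟩
    have hUeq : U = insert (a m) (insert (b m) U') := by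
      rw [hU', Finset.insert_erase hBe, Finset.insert_erase hAU]
    have hAnot : a m ∉ insert (b m) U' := by
      intro hmem
      rcases Finset.mem_insert.mp hmem with h | h
      · exact hABne h
      · exact (Finset.mem_erase.mp (Finset.mem_erase.mp h).2).1 rfl
    have hBnot : b m ∉ U' := fun h => (Finset.mem_erase.mp h).1 rfl
    rw [hUeq, Finset.sum_powerset_insert hAnot, Finset.sum_powerset_insert hBnot,
      Finset.sum_powerset_insert hBnot, ← Finset.sum_add_distrib, ← Finset.sum_add_distrib,
      ← Finset.sum_add_distrib, Finset.card_insert_of_notMem hAnot,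
      Finset.card_insert_of_notMem hBnot]
    have hr : (0:ℝ) ≤ 1 - p ^ 2 := by nlinarith
    refine le_trans (le_trans (le_of_eq ?_)
      (mul_le_mul_of_nonneg_left (ih U' ?_ ?_ ?_ ?_ ?_) hr)) (le_of_eq (by ring))
    · -- pointwise computation
      rw [Finset.mul_sum]
      apply Finset.sum_congr rfl
      intro t ht
      rw [Finset.mem_powerset] at ht
      have htc : t.card ≤ U'.card := Finset.card_le_card ht
      have hat : a m ∉ t := fun h =>
        (Finset.mem_erase.mp (Finset.mem_erase.mp (ht h)).2).1 rfl
      have hbt : b m ∉ t := fun h => (Finset.mem_erase.mp (ht h)).1 rfl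
      have habt : a m ∉ insert (b m) t := by
        intro h
        rcases Finset.mem_insert.mp h with h | h
        exacts [hABne h, hat h]
      have c1 : (insert (b m) t).card = t.card + 1 := Finset.card_insert_of_notMem hbt
      have c2 : (insert (a m) t).card = t.card + 1 := Finset.card_insert_of_notMem hat
      have c3 : (insert (a m) (insert (b m) t)).card = t.card + 2 := by
        rw [Finset.card_insert_of_notMem habt, c1]
      by_cases hJ : ∀ i, i < m → ¬(a i ∈ t ∧ b i ∈ t)
      · have h0 : ∀ i, i < m + 1 → ¬(a i ∈ t ∧ b i ∈ t) := by
          intro i hi hc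
          rcases Nat.lt_succ_iff_lt_or_eq.mp hi with hi' | rfl
          · exact hJ i hi' hc
          · exact hat hc.1
        have h1 : ∀ i, i < m + 1 → ¬(a i ∈ insert (b m) t ∧ b i ∈ insert (b m) t) := by
          intro i hi hc
          rcases Nat.lt_succ_iff_lt_or_eq.mp hi with hi' | rfl
          · have ha' : a i ∈ t := by
              rcases Finset.mem_insert.mp hc.1 with h | h
              · exact absurd h (hab i (by omega) m (by omega))
              · exact h
            have hb' : b i ∈ t := by
              rcases Finset.mem_insert.mp hc.2 with h | h
              · exact absurd h (hbb i (by omega) m (by omega) (by omega))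
              · exact h
            exact hJ i hi' ⟨ha', hb'⟩
          · rcases Finset.mem_insert.mp hc.1 with h | h
            · exact hABne h
            · exact hat h
        have h2 : ∀ i, i < m + 1 → ¬(a i ∈ insert (a m) t ∧ b i ∈ insert (a m) t) := by
          intro i hi hc
          rcases Nat.lt_succ_iff_lt_or_eq.mp hi with hi' | rfl
          · have ha' : a i ∈ t := by
              rcases Finset.mem_insert.mp hc.1 with h | h
              · exact absurd h (haa i (by omega) m (by omega) (by omega))
              · exact h
            have hb' : b i ∈ t := by
              rcases Finset.mem_insert.mp hc.2 with h | h
              · exact absurd h (Ne.symm (hab m (by omega) i (by omega)))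
              · exact h
            exact hJ i hi' ⟨ha', hb'⟩
          · rcases Finset.mem_insert.mp hc.2 with h | h
            · exact hABne h.symm
            · exact hbt h
        have h3 : ¬ ∀ i, i < m + 1 →
            ¬(a i ∈ insert (a m) (insert (b m) t) ∧ b i ∈ insert (a m) (insert (b m) t)) := by
          intro h
          exact h m (by omega) ⟨Finset.mem_insert_self _ _,
            Finset.mem_insert_of_mem (Finset.mem_insert_self _ _)⟩
        rw [if_pos h0, if_pos h1, if_pos h2, if_neg h3, if_pos hJ, c1, c2, c3]
        have e1 : U'.card + 1 + 1 - t.card = (U'.card - t.card) + 2 := by omega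
        have e2 : U'.card + 1 + 1 - (t.card + 1) = (U'.card - t.card) + 1 := by omega
        have e3 : U'.card + 1 + 1 - (t.card + 2) = U'.card - t.card := by omega
        rw [e1, e2, e3]
        ring
      · have hne := hJ
        push_neg at hne
        obtain ⟨i, hi, hai, hbi⟩ := hne
        have h0 : ¬ ∀ i, i < m + 1 → ¬(a i ∈ t ∧ b i ∈ t) :=
          fun h => h i (by omega) ⟨hai, hbi⟩
        have h1 : ¬ ∀ i, i < m + 1 → ¬(a i ∈ insert (b m) t ∧ b i ∈ insert (b m) t) :=
          fun h => h i (by omega)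
            ⟨Finset.mem_insert_of_mem hai, Finset.mem_insert_of_mem hbi⟩
        have h2 : ¬ ∀ i, i < m + 1 → ¬(a i ∈ insert (a m) t ∧ b i ∈ insert (a m) t) :=
          fun h => h i (by omega)
            ⟨Finset.mem_insert_of_mem hai, Finset.mem_insert_of_mem hbi⟩
        have h3 : ¬ ∀ i, i < m + 1 →
            ¬(a i ∈ insert (a m) (insert (b m) t) ∧ b i ∈ insert (a m) (insert (b m) t)) :=
          fun h => h i (by omega)
            ⟨Finset.mem_insert_of_mem (Finset.mem_insert_of_mem hai),
             Finset.mem_insert_of_mem (Finset.mem_insert_of_mem hbi)⟩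
        rw [if_neg h0, if_neg h1, if_neg h2, if_neg h3, if_neg hJ]
        ring
    · intro i hi
      exact Finset.mem_erase.mpr ⟨hab i (by omega) m (by omega),
        Finset.mem_erase.mpr ⟨haa i (by omega) m (by omega) (by omega), haU i (by omega)⟩⟩
    · intro i hi
      exact Finset.mem_erase.mpr ⟨hbb i (by omega) m (by omega) (by omega),
        Finset.mem_erase.mpr ⟨Ne.symm (hab m (by omega) i (by omega)), hbU i (by omega)⟩⟩
    · intro i hi j hj
      exact hab i (by omega) j (by omega)
    · intro i hi j hj hne
      exact haa i (by omega) j (by omega) hne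
    · intro i hi j hj hne
      exact hbb i (by omega) j (by omega) hne

lemma main_bound (p : ℝ) (hp0 : 0 < p) (hp1 : p ≤ 1) (k : ℕ) :
    ∑ A ∈ (Finset.univ.erase (pbtRoot k)).powerset,
        p ^ A.card * (1 - p) ^ ((Finset.univ.erase (pbtRoot k)).card - A.card) *
          (if ExpIndep (pbt k) (insert (pbtRoot k) A) then (1 : ℝ) else 0)
      ≤ (1 - p ^ 2) ^ (k / 2) := by
  have hnpos : 0 < 2 ^ (k + 1) - 1 := by
    have : 1 < 2 ^ (k + 1) := Nat.one_lt_two_pow_iff.mpr (by omega)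
    omega
  set vtx : ℕ → Fin (2 ^ (k + 1) - 1) :=
    fun j => ⟨(2 ^ j - 1) % (2 ^ (k + 1) - 1), Nat.mod_lt _ hnpos⟩ with hvtx
  have hval : ∀ j, j ≤ k → ((vtx j : Fin (2 ^ (k + 1) - 1)) : ℕ) = 2 ^ j - 1 := by
    intro j hj
    show (2 ^ j - 1) % (2 ^ (k + 1) - 1) = 2 ^ j - 1
    apply Nat.mod_eq_of_lt
    have h1 : (2:ℕ) ^ j ≤ 2 ^ k := Nat.pow_le_pow_right (by norm_num) hj
    have h2 : (2:ℕ) ^ (k + 1) = 2 * 2 ^ k := by rw [pow_succ]; ring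
    have h3 : (1:ℕ) ≤ 2 ^ j := Nat.one_le_two_pow
    omega
  set av : ℕ → Fin (2 ^ (k + 1) - 1) := fun i => vtx (2 * i + 1) with hav
  set bv : ℕ → Fin (2 ^ (k + 1) - 1) := fun i => vtx (2 * i + 2) with hbv
  have hvne : ∀ j1 j2, j1 ≤ k → j2 ≤ k → j1 ≠ j2 → vtx j1 ≠ vtx j2 := by
    intro j1 j2 h1 h2 hne heq
    apply hne
    have hv : ((vtx j1 : Fin (2 ^ (k + 1) - 1)) : ℕ) = ((vtx j2 : Fin (2 ^ (k + 1) - 1)) : ℕ) :=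
      congrArg Fin.val heq
    rw [hval j1 h1, hval j2 h2] at hv
    have e1 : (1:ℕ) ≤ 2 ^ j1 := Nat.one_le_two_pow
    have e2 : (1:ℕ) ≤ 2 ^ j2 := Nat.one_le_two_pow
    exact Nat.pow_right_injective (le_refl 2) (by omega : (2:ℕ) ^ j1 = 2 ^ j2)
  have hadj : ∀ i, i < k / 2 → (pbt k).Adj (av i) (bv i) := by
    intro i hi
    have ea : ((av i : Fin (2 ^ (k + 1) - 1)) : ℕ) = 2 ^ (2 * i + 1) - 1 :=
      hval _ (by omega)
    have eb : ((bv i : Fin (2 ^ (k + 1) - 1)) : ℕ) = 2 ^ (2 * i + 2) - 1 :=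
      hval _ (by omega)
    unfold pbt
    rw [SimpleGraph.fromRel_adj]
    constructor
    · exact hvne _ _ (by omega) (by omega) (by omega)
    · left; left
      have hp2 : (2:ℕ) ^ (2 * i + 2) = 2 * 2 ^ (2 * i + 1) := by rw [pow_succ]; ring
      have e1 : (1:ℕ) ≤ 2 ^ (2 * i + 1) := Nat.one_le_two_pow
      rw [ea, eb]
      omega
  have hroot : ∀ j, 1 ≤ j → j ≤ k → vtx j ≠ pbtRoot k := by
    intro j h1 h2 heq
    have hv : ((vtx j : Fin (2 ^ (k + 1) - 1)) : ℕ) = ((pbtRoot k : Fin (2 ^ (k + 1) - 1)) : ℕ) :=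
      congrArg Fin.val heq
    rw [hval j h2, show ((pbtRoot k : Fin (2 ^ (k + 1) - 1)) : ℕ) = 0 from rfl] at hv
    have : 1 < 2 ^ j := Nat.one_lt_two_pow_iff.mpr (by omega)
    omega
  refine le_trans ?_ (key_bound p hp0.le hp1 av bv (k / 2) (Finset.univ.erase (pbtRoot k))
    ?_ ?_ ?_ ?_ ?_)
  · apply Finset.sum_le_sum
    intro A hA
    have hw : (0:ℝ) ≤ p ^ A.card *
        (1 - p) ^ ((Finset.univ.erase (pbtRoot k)).card - A.card) :=
      mul_nonneg (pow_nonneg hp0.le _) (pow_nonneg (by linarith) _)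
    have himp : ExpIndep (pbt k) (insert (pbtRoot k) A) →
        ∀ i, i < k / 2 → ¬(av i ∈ A ∧ bv i ∈ A) := by
      intro hEI i hi hc
      exact not_expIndep_of_adj (pbt k) _ (Finset.mem_insert_of_mem hc.1)
        (Finset.mem_insert_of_mem hc.2) (hadj i hi) hEI
    by_cases h1 : ExpIndep (pbt k) (insert (pbtRoot k) A)
    · rw [if_pos h1, if_pos (himp h1)]
    · rw [if_neg h1]
      split_ifs <;> nlinarith [hw]
  · intro i hi
    exact Finset.mem_erase.mpr ⟨hroot _ (by omega) (by omega), Finset.mem_univ _⟩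
  · intro i hi
    exact Finset.mem_erase.mpr ⟨hroot _ (by omega) (by omega), Finset.mem_univ _⟩
  · intro i hi j hj
    exact hvne _ _ (by omega) (by omega) (by omega)
  · intro i hi j hj hne
    exact hvne _ _ (by omega) (by omega) (by omega)
  · intro i hi j hj hne
    exact hvne _ _ (by omega) (by omega) (by omega)

/-- If `p ∈ (0,1]` and, for each `k`, `S` is a random set of vertices of the perfect
binary tree `T(k)` of depth `k` containing the root and containing every other vertex
independently with probability `p`, then the probability that `S` is exponentially
independent in `T(k)` tends to `0` as `k → ∞`.  The probability is written out as the
sum, over all sets `A` of non-root vertices, of the product Bernoulli weight of `A`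
times the indicator that `{root} ∪ A` is exponentially independent. -/
theorem stmt14 (p : ℝ) (hp0 : 0 < p) (hp1 : p ≤ 1) :
    Filter.Tendsto (fun k : ℕ =>
      ∑ A ∈ (Finset.univ.erase (pbtRoot k)).powerset,
        p ^ A.card * (1 - p) ^ ((Finset.univ.erase (pbtRoot k)).card - A.card) *
          (if ExpIndep (pbt k) (insert (pbtRoot k) A) then (1 : ℝ) else 0))
      Filter.atTop (nhds 0) := by
  have hr0 : (0:ℝ) ≤ 1 - p ^ 2 := by nlinarith
  have hr1 : 1 - p ^ 2 < 1 := by nlinarith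
  refine squeeze_zero (g := fun k : ℕ => (1 - p ^ 2) ^ (k / 2)) ?_ ?_ ?_
  · intro k
    apply Finset.sum_nonneg
    intro A _
    have hw : (0:ℝ) ≤ p ^ A.card *
        (1 - p) ^ ((Finset.univ.erase (pbtRoot k)).card - A.card) :=
      mul_nonneg (pow_nonneg hp0.le _) (pow_nonneg (by linarith) _)
    split_ifs <;> nlinarith [hw]
  · intro k
    exact main_bound p hp0 hp1 k
  · have hdiv : Filter.Tendsto (fun k : ℕ => k / 2) Filter.atTop Filter.atTop :=
      Filter.tendsto_atTop_atTop.mpr fun b => ⟨2 * b, fun k hk => by omega⟩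
    exact (tendsto_pow_atTop_nhds_zero_of_lt_one hr0 hr1).comp hdiv
end
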